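/- arXiv:2506.06542 — 4 statements merged into one kernel-verified Lean document; each statement's English description precedes it below -/
import Mathlib

section
/- Fix θ_t ∈ ℝ^d and let q(·|θ_t) be a strictly positive, continuously differentiable probability density on ℝ^d. Let p be a likelihood family such that for every x ∈ ℝ^k the map θ ↦ p(x|θ) is continuously differentiable, and let S : ℝ^k → ℝ^d be measurable. Assume the boundary condition: for every x ∈ ℝ^k and every i ∈ {1,…,d}, the function θ ↦ p(x|θ) q(θ|θ_t) and its i-th partial derivative in θ are Lebesgue-integrable over ℝ^d and ∫_{ℝ^d} ∂/∂θ_i [ p(x|θ) q(θ|θ_t) ] dθ = 0. Assume moreover that the functions (x,θ) ↦ ‖∇_θ log p(x|θ)‖², ‖S(x)‖², S(x)·∇_θ log p(x|θ), and S(x)·∇_θ log q(θ|θ_t) are all integrable with respect to the joint density p(x|θ) q(θ|θ_t) on ℝ^k × ℝ^d. Then ∫∫ ‖∇_θ log p(x|θ) − S(x)‖² p(x|θ) q(θ|θ_t) dx dθ = ∫∫ [ ‖S(x)‖² + 2 S(x)·∇_θ log q(θ|θ_t) ] p(x|θ) q(θ|θ_t) dx dθ + ∫∫ ‖∇_θ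 log p(x|θ)‖² p(x|θ) q(θ|θ_t) dx dθ. -/
open MeasureTheory RealInnerProductSpace

lemma inner_gradient_eq_fderiv {E : Type*} [NormedAddCommGroup E] [InnerProductSpace ℝ E]
    [CompleteSpace E] (f : E → ℝ) (x v : E) :
    ⟪gradient f x, v⟫ = fderiv ℝ f x v := by
  simp [gradient, InnerProductSpace.toDual_symm_apply]

/-- **Local Fisher Score Matching identity** (Theorem 1 of the paper).
The explicit Fisher score matching objective equals, up to the additive constant
`∫∫ ‖∇_θ log p(x|θ)‖² p q`, the tractable objective involving only the proposal score. -/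
theorem local_fisher_score_matching_identity
    (d k : ℕ) (hd : 0 < d) (hk : 0 < k)
    (θt : EuclideanSpace ℝ (Fin d))
    -- `q` is the proposal density `q(· | θt)` : strictly positive, C¹ probability density
    (q : EuclideanSpace ℝ (Fin d) → ℝ)
    (hq_pos : ∀ θ, 0 < q θ)
    (hq_smooth : ContDiff ℝ 1 q)
    (hq_prob : ∫ θ, q θ = 1)
    -- `p θ x` is the likelihood family `p(x|θ)`
    (p : EuclideanSpace ℝ (Fin d) → EuclideanSpace ℝ (Fin k) → ℝ)
    (hp_meas : Measurable (Function.uncurry p))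
    (hp_pos : ∀ θ x, 0 < p θ x)
    (hp_prob : ∀ θ, ∫ x, p θ x = 1)
    (hp_smooth : ∀ x, ContDiff ℝ 1 (fun θ => p θ x))
    -- the score model
    (S : EuclideanSpace ℝ (Fin k) → EuclideanSpace ℝ (Fin d))
    (hS_meas : Measurable S)
    -- boundary condition: integrability of `θ ↦ p(x|θ) q(θ|θt)` and of its partial
    -- derivatives, and vanishing of the integral of each partial derivative
    (hbd_int : ∀ x, Integrable (fun θ => p θ x * q θ))
    (hbd_int' : ∀ (x : EuclideanSpace ℝ (Fin k)) (i : Fin d),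
      Integrable (fun θ =>
        fderiv ℝ (fun θ' => p θ' x * q θ') θ (EuclideanSpace.single i 1)))
    (hbd : ∀ (x : EuclideanSpace ℝ (Fin k)) (i : Fin d),
      ∫ θ, fderiv ℝ (fun θ' => p θ' x * q θ') θ (EuclideanSpace.single i 1) = 0)
    -- joint integrability of the four integrands against the joint density
    (hint1 : Integrable (fun z : EuclideanSpace ℝ (Fin k) × EuclideanSpace ℝ (Fin d) =>
      ‖gradient (fun θ => Real.log (p θ z.1)) z.2‖ ^ 2 * (p z.2 z.1 * q z.2)))
    (hint2 : Integrable (fun z : EuclideanSpace ℝ (Fin k) × EuclideanSpace ℝ (Fin d) =>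
      ‖S z.1‖ ^ 2 * (p z.2 z.1 * q z.2)))
    (hint3 : Integrable (fun z : EuclideanSpace ℝ (Fin k) × EuclideanSpace ℝ (Fin d) =>
      ⟪S z.1, gradient (fun θ => Real.log (p θ z.1)) z.2⟫ * (p z.2 z.1 * q z.2)))
    (hint4 : Integrable (fun z : EuclideanSpace ℝ (Fin k) × EuclideanSpace ℝ (Fin d) =>
      ⟪S z.1, gradient (fun θ => Real.log (q θ)) z.2⟫ * (p z.2 z.1 * q z.2))) :
    ∫ z : EuclideanSpace ℝ (Fin k) × EuclideanSpace ℝ (Fin d),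
        ‖gradient (fun θ => Real.log (p θ z.1)) z.2 - S z.1‖ ^ 2 * (p z.2 z.1 * q z.2)
      = (∫ z : EuclideanSpace ℝ (Fin k) × EuclideanSpace ℝ (Fin d),
          (‖S z.1‖ ^ 2 + 2 * ⟪S z.1, gradient (fun θ => Real.log (q θ)) z.2⟫)
            * (p z.2 z.1 * q z.2))
        + ∫ z : EuclideanSpace ℝ (Fin k) × EuclideanSpace ℝ (Fin d),
            ‖gradient (fun θ => Real.log (p θ z.1)) z.2‖ ^ 2 * (p z.2 z.1 * q z.2) := by
  -- notation
  set g : EuclideanSpace ℝ (Fin k) × EuclideanSpace ℝ (Fin d) → EuclideanSpace ℝ (Fin d) :=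
    fun z => gradient (fun θ => Real.log (p θ z.1)) z.2 with hg
  set lq : EuclideanSpace ℝ (Fin k) × EuclideanSpace ℝ (Fin d) → EuclideanSpace ℝ (Fin d) :=
    fun z => gradient (fun θ => Real.log (q θ)) z.2 with hlq
  -- pointwise identity relating the scores to the derivative of the joint density
  have hpt : ∀ (x : EuclideanSpace ℝ (Fin k)) (θ : EuclideanSpace ℝ (Fin d)),
      (⟪S x, gradient (fun θ' => Real.log (p θ' x)) θ⟫
        + ⟪S x, gradient (fun θ' => Real.log (q θ')) θ⟫) * (p θ x * q θ)
      = fderiv ℝ (fun θ' => p θ' x * q θ') θ (S x) := by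
    intro x θ
    have hdp : DifferentiableAt ℝ (fun θ' => p θ' x) θ :=
      ((hp_smooth x).differentiable one_ne_zero).differentiableAt
    have hdq : DifferentiableAt ℝ q θ := (hq_smooth.differentiable one_ne_zero).differentiableAt
    have hlp' : HasFDerivAt (fun θ' => Real.log (p θ' x))
        ((p θ x)⁻¹ • fderiv ℝ (fun θ' => p θ' x) θ) θ :=
      hdp.hasFDerivAt.log (hp_pos θ x).ne'
    have hlq' : HasFDerivAt (fun θ' => Real.log (q θ'))
        ((q θ)⁻¹ • fderiv ℝ q θ) θ :=
      hdq.hasFDerivAt.log (hq_pos θ).ne'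
    have h1 : ⟪S x, gradient (fun θ' => Real.log (p θ' x)) θ⟫
        = (p θ x)⁻¹ * fderiv ℝ (fun θ' => p θ' x) θ (S x) := by
      rw [real_inner_comm, inner_gradient_eq_fderiv, hlp'.fderiv]
      simp
    have h2 : ⟪S x, gradient (fun θ' => Real.log (q θ')) θ⟫
        = (q θ)⁻¹ * fderiv ℝ q θ (S x) := by
      rw [real_inner_comm, inner_gradient_eq_fderiv, hlq'.fderiv]
      simp
    have hprod : fderiv ℝ (fun θ' => p θ' x * q θ') θ
        = p θ x • fderiv ℝ q θ + q θ • fderiv ℝ (fun θ' => p θ' x) θ :=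
      (hdp.hasFDerivAt.mul hdq.hasFDerivAt).fderiv
    rw [h1, h2, hprod]
    have hp0 : p θ x ≠ 0 := (hp_pos θ x).ne'
    have hq0 : q θ ≠ 0 := (hq_pos θ).ne'
    simp only [ContinuousLinearMap.add_apply, ContinuousLinearMap.coe_smul', Pi.smul_apply,
      smul_eq_mul]
    field_simp
    ring
  -- for each x, the θ-integral of the derivative of the joint density vanishes
  have hinner : ∀ x : EuclideanSpace ℝ (Fin k),
      ∫ θ, fderiv ℝ (fun θ' => p θ' x * q θ') θ (S x) = 0 := by
    intro x
    have hrepr : ∑ i, S x i • EuclideanSpace.single i (1 : ℝ) = S x := by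
      simpa [EuclideanSpace.basisFun_apply, EuclideanSpace.basisFun_repr] using
        (EuclideanSpace.basisFun (Fin d) ℝ).sum_repr (S x)
    have step1 : ∫ θ, fderiv ℝ (fun θ' => p θ' x * q θ') θ (S x)
        = ∫ θ, ∑ i, S x i * fderiv ℝ (fun θ' => p θ' x * q θ') θ
            (EuclideanSpace.single i (1 : ℝ)) := by
      refine integral_congr_ae (Filter.Eventually.of_forall fun θ => ?_)
      show fderiv ℝ (fun θ' => p θ' x * q θ') θ (S x) = _
      conv_lhs => rw [← hrepr]
      rw [map_sum]
      simp
    rw [step1, integral_finset_sum _ (fun i _ => (hbd_int' x i).const_mul _)]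
    refine Finset.sum_eq_zero fun i _ => ?_
    rw [integral_const_mul, hbd x i, mul_zero]
  -- the cross term vanishes
  have key : ∫ z : EuclideanSpace ℝ (Fin k) × EuclideanSpace ℝ (Fin d),
      (⟪S z.1, g z⟫ + ⟪S z.1, lq z⟫) * (p z.2 z.1 * q z.2) = 0 := by
    have hintF' : Integrable (fun z : EuclideanSpace ℝ (Fin k) × EuclideanSpace ℝ (Fin d) =>
        fderiv ℝ (fun θ' => p θ' z.1 * q θ') z.2 (S z.1)) := by
      refine (hint3.add hint4).congr (Filter.Eventually.of_forall fun z => ?_)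
      simp only [Pi.add_apply]
      rw [← hpt z.1 z.2]
      ring
    have heq : ∫ z : EuclideanSpace ℝ (Fin k) × EuclideanSpace ℝ (Fin d),
        (⟪S z.1, g z⟫ + ⟪S z.1, lq z⟫) * (p z.2 z.1 * q z.2)
        = ∫ z : EuclideanSpace ℝ (Fin k) × EuclideanSpace ℝ (Fin d),
            fderiv ℝ (fun θ' => p θ' z.1 * q θ') z.2 (S z.1) :=
      integral_congr_ae (Filter.Eventually.of_forall fun z => hpt z.1 z.2)
    rw [heq]
    rw [show (volume : Measure (EuclideanSpace ℝ (Fin k) × EuclideanSpace ℝ (Fin d)))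
        = (volume : Measure (EuclideanSpace ℝ (Fin k))).prod volume from Measure.volume_eq_prod _ _]
        at hintF' ⊢
    rw [integral_prod _ hintF']
    simp [hinner]
  -- expand the squared norm
  have hexp : ∀ z : EuclideanSpace ℝ (Fin k) × EuclideanSpace ℝ (Fin d),
      ‖g z - S z.1‖ ^ 2 * (p z.2 z.1 * q z.2)
      = ‖g z‖ ^ 2 * (p z.2 z.1 * q z.2) + ‖S z.1‖ ^ 2 * (p z.2 z.1 * q z.2)
        - 2 * (⟪S z.1, g z⟫ * (p z.2 z.1 * q z.2)) := by
    intro z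
    rw [norm_sub_sq_real, real_inner_comm (g z) (S z.1)]
    ring
  have hg3 : Integrable (fun z : EuclideanSpace ℝ (Fin k) × EuclideanSpace ℝ (Fin d) =>
      ⟪S z.1, g z⟫ * (p z.2 z.1 * q z.2)) := hint3
  have hg4 : Integrable (fun z : EuclideanSpace ℝ (Fin k) × EuclideanSpace ℝ (Fin d) =>
      ⟪S z.1, lq z⟫ * (p z.2 z.1 * q z.2)) := hint4
  have hg1 : Integrable (fun z : EuclideanSpace ℝ (Fin k) × EuclideanSpace ℝ (Fin d) =>
      ‖g z‖ ^ 2 * (p z.2 z.1 * q z.2)) := hint1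
  have hL : ∫ z : EuclideanSpace ℝ (Fin k) × EuclideanSpace ℝ (Fin d),
      ‖g z - S z.1‖ ^ 2 * (p z.2 z.1 * q z.2)
      = (∫ z : EuclideanSpace ℝ (Fin k) × EuclideanSpace ℝ (Fin d),
          ‖g z‖ ^ 2 * (p z.2 z.1 * q z.2))
        + (∫ z : EuclideanSpace ℝ (Fin k) × EuclideanSpace ℝ (Fin d),
            ‖S z.1‖ ^ 2 * (p z.2 z.1 * q z.2))
        - 2 * ∫ z : EuclideanSpace ℝ (Fin k) × EuclideanSpace ℝ (Fin d),
            ⟪S z.1, g z⟫ * (p z.2 z.1 * q z.2) := by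
    have hA : Integrable (fun z : EuclideanSpace ℝ (Fin k) × EuclideanSpace ℝ (Fin d) =>
        ‖g z‖ ^ 2 * (p z.2 z.1 * q z.2) + ‖S z.1‖ ^ 2 * (p z.2 z.1 * q z.2)) := hg1.add hint2
    have hC : Integrable (fun z : EuclideanSpace ℝ (Fin k) × EuclideanSpace ℝ (Fin d) =>
        2 * (⟪S z.1, g z⟫ * (p z.2 z.1 * q z.2))) := hg3.const_mul 2
    calc ∫ z : EuclideanSpace ℝ (Fin k) × EuclideanSpace ℝ (Fin d),
          ‖g z - S z.1‖ ^ 2 * (p z.2 z.1 * q z.2)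
        = ∫ z : EuclideanSpace ℝ (Fin k) × EuclideanSpace ℝ (Fin d),
            (‖g z‖ ^ 2 * (p z.2 z.1 * q z.2) + ‖S z.1‖ ^ 2 * (p z.2 z.1 * q z.2)
              - 2 * (⟪S z.1, g z⟫ * (p z.2 z.1 * q z.2))) :=
          integral_congr_ae (Filter.Eventually.of_forall hexp)
      _ = (∫ z : EuclideanSpace ℝ (Fin k) × EuclideanSpace ℝ (Fin d),
            (‖g z‖ ^ 2 * (p z.2 z.1 * q z.2) + ‖S z.1‖ ^ 2 * (p z.2 z.1 * q z.2)))
          - ∫ z : EuclideanSpace ℝ (Fin k) × EuclideanSpace ℝ (Fin d),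
              2 * (⟪S z.1, g z⟫ * (p z.2 z.1 * q z.2)) := integral_sub hA hC
      _ = (∫ z : EuclideanSpace ℝ (Fin k) × EuclideanSpace ℝ (Fin d),
            ‖g z‖ ^ 2 * (p z.2 z.1 * q z.2))
          + (∫ z : EuclideanSpace ℝ (Fin k) × EuclideanSpace ℝ (Fin d),
              ‖S z.1‖ ^ 2 * (p z.2 z.1 * q z.2))
          - 2 * ∫ z : EuclideanSpace ℝ (Fin k) × EuclideanSpace ℝ (Fin d),
              ⟪S z.1, g z⟫ * (p z.2 z.1 * q z.2) := by
          rw [integral_add hg1 hint2, integral_const_mul]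
  have hR : ∫ z : EuclideanSpace ℝ (Fin k) × EuclideanSpace ℝ (Fin d),
      (‖S z.1‖ ^ 2 + 2 * ⟪S z.1, lq z⟫) * (p z.2 z.1 * q z.2)
      = (∫ z : EuclideanSpace ℝ (Fin k) × EuclideanSpace ℝ (Fin d),
          ‖S z.1‖ ^ 2 * (p z.2 z.1 * q z.2))
        + 2 * ∫ z : EuclideanSpace ℝ (Fin k) × EuclideanSpace ℝ (Fin d),
            ⟪S z.1, lq z⟫ * (p z.2 z.1 * q z.2) := by
    have hC : Integrable (fun z : EuclideanSpace ℝ (Fin k) × EuclideanSpace ℝ (Fin d) =>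
        2 * (⟪S z.1, lq z⟫ * (p z.2 z.1 * q z.2))) := hg4.const_mul 2
    calc ∫ z : EuclideanSpace ℝ (Fin k) × EuclideanSpace ℝ (Fin d),
          (‖S z.1‖ ^ 2 + 2 * ⟪S z.1, lq z⟫) * (p z.2 z.1 * q z.2)
        = ∫ z : EuclideanSpace ℝ (Fin k) × EuclideanSpace ℝ (Fin d),
            (‖S z.1‖ ^ 2 * (p z.2 z.1 * q z.2) + 2 * (⟪S z.1, lq z⟫ * (p z.2 z.1 * q z.2))) :=
          integral_congr_ae (Filter.Eventually.of_forall fun z => by ring)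
      _ = (∫ z : EuclideanSpace ℝ (Fin k) × EuclideanSpace ℝ (Fin d),
            ‖S z.1‖ ^ 2 * (p z.2 z.1 * q z.2))
          + 2 * ∫ z : EuclideanSpace ℝ (Fin k) × EuclideanSpace ℝ (Fin d),
              ⟪S z.1, lq z⟫ * (p z.2 z.1 * q z.2) := by
          rw [integral_add hint2 hC, integral_const_mul]
  have hCD : (∫ z : EuclideanSpace ℝ (Fin k) × EuclideanSpace ℝ (Fin d),
      ⟪S z.1, g z⟫ * (p z.2 z.1 * q z.2))
      + (∫ z : EuclideanSpace ℝ (Fin k) × EuclideanSpace ℝ (Fin d),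
          ⟪S z.1, lq z⟫ * (p z.2 z.1 * q z.2)) = 0 := by
    rw [← integral_add hg3 hg4, ← key]
    exact integral_congr_ae (Filter.Eventually.of_forall fun z => by ring)
  rw [hL, hR]
  linarith
end

section
/- Fix x ∈ ℝ^k, θ_t ∈ ℝ^d, σ > 0 and L ≥ 0. Let p be a likelihood family such that θ ↦ log p(x|θ) is differentiable with L-Lipschitz gradient g(x;·) = ∇_θ log p(x|·). Let q_σ(θ|θ_t) = (2πσ²)^{−d/2} exp(−‖θ−θ_t‖²/(2σ²)), Z = ∫_{ℝ^d} p(x|θ) q_σ(θ|θ_t) dθ ∈ (0,∞), π(θ) = p(x|θ) q_σ(θ|θ_t)/Z the induced posterior density, and M = sup_{θ∈ℝ^d} p(x|θ)/Z (assumed finite), which equals sup_θ π(θ)/q_σ(θ|θ_t). Assume θ ↦ ‖g(x;θ)‖ is π-integrable. Then ‖ ∫_{ℝ^d} g(x;θ) π(θ) dθ − g(x;θ_t) ‖ ≤ L · √d · σ · M. -/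
open MeasureTheory

/-- The isotropic Gaussian proposal density `q_σ(θ | θt) = (2πσ²)^{-d/2} exp(-‖θ-θt‖²/(2σ²))`
on `ℝ^d`. -/
noncomputable def gaussianProposal (d : ℕ) (σ : ℝ)
    (θ θt : EuclideanSpace ℝ (Fin d)) : ℝ :=
  (2 * Real.pi * σ ^ 2) ^ (-(d : ℝ) / 2) * Real.exp (-‖θ - θt‖ ^ 2 / (2 * σ ^ 2))

section Aux
open Real

lemma aux_integrable_sq_mul (b : ℝ) (hb : 0 < b) :
    Integrable (fun x : ℝ => x ^ 2 * Real.exp (-b * x ^ 2)) := by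
  have h2 : ∀ x : ℝ, x ^ (2:ℝ) = x ^ 2 := fun x => by
    rw [show (2:ℝ) = ((2:ℕ):ℝ) by norm_num, Real.rpow_natCast]
  have := integrable_rpow_mul_exp_neg_mul_sq hb (s := 2) (by norm_num)
  simpa only [h2] using this

lemma aux_integral_sq_mul (b : ℝ) (hb : 0 < b) :
    ∫ x : ℝ, x ^ 2 * Real.exp (-b * x ^ 2) = Real.sqrt (π / b) / (2 * b) := by
  have hderiv : ∀ x : ℝ, HasDerivAt (fun x : ℝ => x * Real.exp (-b * x ^ 2))
      (Real.exp (-b * x ^ 2) - 2 * b * (x ^ 2 * Real.exp (-b * x ^ 2))) x := by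
    intro x
    have h1 : HasDerivAt (fun x : ℝ => -b * x ^ 2) (-b * (2 * x)) x := by
      simpa using ((hasDerivAt_pow 2 x).const_mul (-b))
    have h2 := h1.exp
    have h3 := (hasDerivAt_id x).mul h2
    exact h3.congr_deriv (by simp only [id]; ring)
  have hint : Integrable (fun x : ℝ => Real.exp (-b * x ^ 2) -
      2 * b * (x ^ 2 * Real.exp (-b * x ^ 2))) :=
    (integrable_exp_neg_mul_sq hb).sub ((aux_integrable_sq_mul b hb).const_mul _)
  have h0 := integral_eq_zero_of_hasDerivAt_of_integrable hderiv hint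
    (integrable_mul_exp_neg_mul_sq hb)
  rw [integral_sub (integrable_exp_neg_mul_sq hb) ((aux_integrable_sq_mul b hb).const_mul _),
    integral_const_mul, integral_gaussian] at h0
  have hb' : (2 : ℝ) * b ≠ 0 := by positivity
  field_simp at h0 ⊢
  linarith

noncomputable def phi1 (σ a t : ℝ) : ℝ :=
  (2 * Real.pi * σ ^ 2) ^ (-(1:ℝ) / 2) * Real.exp (-(t - a) ^ 2 / (2 * σ ^ 2))

lemma phi1_eq (σ a : ℝ) (hσ : 0 < σ) (t : ℝ) :
    phi1 σ a t = (2 * Real.pi * σ ^ 2) ^ (-(1:ℝ) / 2) *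
      Real.exp (-(1/(2*σ^2)) * (t - a) ^ 2) := by
  unfold phi1
  congr 2
  field_simp

lemma phi1_integrable (σ a : ℝ) (hσ : 0 < σ) : Integrable (phi1 σ a) := by
  have hb : 0 < 1/(2*σ^2) := by positivity
  have := ((integrable_exp_neg_mul_sq hb).comp_sub_right a).const_mul
    ((2 * Real.pi * σ ^ 2) ^ (-(1:ℝ) / 2))
  refine this.congr ?_
  · exact Filter.Eventually.of_forall fun t => (phi1_eq σ a hσ t).symm

lemma phi1_pos (σ a : ℝ) (hσ : 0 < σ) (t : ℝ) : 0 < phi1 σ a t := by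
  unfold phi1
  have : (0:ℝ) < 2 * Real.pi * σ ^ 2 := by positivity
  positivity

lemma sqrt_pi_div (σ : ℝ) (hσ : 0 < σ) :
    Real.sqrt (π / (1/(2*σ^2))) = (2 * Real.pi * σ ^ 2) ^ ((1:ℝ)/2) := by
  rw [show π / (1/(2*σ^2)) = 2 * Real.pi * σ ^ 2 by field_simp, Real.sqrt_eq_rpow]

lemma phi1_integral (σ a : ℝ) (hσ : 0 < σ) : ∫ t, phi1 σ a t = 1 := by
  have hb : 0 < 1/(2*σ^2) := by positivity
  have hpos : (0:ℝ) < 2 * Real.pi * σ ^ 2 := by positivity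
  calc ∫ t, phi1 σ a t
      = ∫ t, (2 * Real.pi * σ ^ 2) ^ (-(1:ℝ) / 2) *
          Real.exp (-(1/(2*σ^2)) * (t - a) ^ 2) := by
        exact integral_congr_ae (Filter.Eventually.of_forall fun t => phi1_eq σ a hσ t)
    _ = (2 * Real.pi * σ ^ 2) ^ (-(1:ℝ) / 2) * ∫ t, Real.exp (-(1/(2*σ^2)) * (t-a) ^ 2) :=
        integral_const_mul _ _
    _ = (2 * Real.pi * σ ^ 2) ^ (-(1:ℝ) / 2) * ∫ s, Real.exp (-(1/(2*σ^2)) * s ^ 2) := by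
        rw [integral_sub_right_eq_self (fun s => Real.exp (-(1/(2*σ^2)) * s ^ 2)) a]
    _ = (2 * Real.pi * σ ^ 2) ^ (-(1:ℝ) / 2) * Real.sqrt (π / (1/(2*σ^2))) := by
        rw [integral_gaussian]
    _ = 1 := by
        rw [sqrt_pi_div σ hσ, ← Real.rpow_add hpos]
        norm_num

lemma phi1_sq_integrable (σ a : ℝ) (hσ : 0 < σ) :
    Integrable (fun t => phi1 σ a t * (t - a) ^ 2) := by
  have hb : 0 < 1/(2*σ^2) := by positivity
  have := (((aux_integrable_sq_mul _ hb).comp_sub_right a).const_mul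
    ((2 * Real.pi * σ ^ 2) ^ (-(1:ℝ) / 2)))
  refine this.congr (Filter.Eventually.of_forall fun t => ?_)
  show _ = phi1 σ a t * (t - a) ^ 2
  rw [phi1_eq σ a hσ t]; ring

lemma phi1_sq_integral (σ a : ℝ) (hσ : 0 < σ) :
    ∫ t, phi1 σ a t * (t - a) ^ 2 = σ ^ 2 := by
  have hb : 0 < 1/(2*σ^2) := by positivity
  have hpos : (0:ℝ) < 2 * Real.pi * σ ^ 2 := by positivity
  calc ∫ t, phi1 σ a t * (t - a) ^ 2
      = ∫ t, (2 * Real.pi * σ ^ 2) ^ (-(1:ℝ) / 2) *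
          ((t-a) ^ 2 * Real.exp (-(1/(2*σ^2)) * (t - a) ^ 2)) := by
        refine integral_congr_ae (Filter.Eventually.of_forall fun t => ?_)
        show phi1 σ a t * (t - a) ^ 2 = _
        rw [phi1_eq σ a hσ t]; ring
    _ = (2 * Real.pi * σ ^ 2) ^ (-(1:ℝ) / 2) *
        ∫ t, (t-a) ^ 2 * Real.exp (-(1/(2*σ^2)) * (t-a) ^ 2) := integral_const_mul _ _
    _ = (2 * Real.pi * σ ^ 2) ^ (-(1:ℝ) / 2) *
        ∫ s, s ^ 2 * Real.exp (-(1/(2*σ^2)) * s ^ 2) := by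
        rw [integral_sub_right_eq_self (fun s => s ^ 2 * Real.exp (-(1/(2*σ^2)) * s ^ 2)) a]
    _ = (2 * Real.pi * σ ^ 2) ^ (-(1:ℝ) / 2) *
        (Real.sqrt (π / (1/(2*σ^2))) / (2 * (1/(2*σ^2)))) := by
        rw [aux_integral_sq_mul _ hb]
    _ = ((2 * Real.pi * σ ^ 2) ^ (-(1:ℝ) / 2) * Real.sqrt (π / (1/(2*σ^2)))) *
        (1 / (2 * (1/(2*σ^2)))) := by ring
    _ = σ ^ 2 := by
        rw [sqrt_pi_div σ hσ, ← Real.rpow_add hpos]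
        norm_num
        field_simp


lemma euclidean_norm_sq (d : ℕ) (θ θt : EuclideanSpace ℝ (Fin d)) :
    ‖θ - θt‖ ^ 2 = ∑ i, (θ i - θt i) ^ 2 := by
  rw [EuclideanSpace.norm_eq, Real.sq_sqrt (by positivity)]
  congr 1; ext i
  simp [sq_abs]

lemma gaussianProposal_eq_prod (d : ℕ) (σ : ℝ) (hσ : 0 < σ)
    (θ θt : EuclideanSpace ℝ (Fin d)) :
    gaussianProposal d σ θ θt = ∏ i, phi1 σ (θt i) (θ i) := by
  have hpos : (0:ℝ) ≤ 2 * Real.pi * σ ^ 2 := by positivity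
  unfold gaussianProposal phi1
  rw [Finset.prod_mul_distrib, Finset.prod_const, ← Real.exp_sum]
  congr 1
  · rw [← Real.rpow_natCast ((2 * Real.pi * σ ^ 2) ^ (-(1:ℝ)/2)) _, ← Real.rpow_mul hpos]
    congr 1
    simp [Finset.card_univ]
    ring
  · rw [euclidean_norm_sq]
    congr 1
    rw [← Finset.sum_neg_distrib, Finset.sum_div]

section Multi
variable {d : ℕ} {σ : ℝ} (θt : EuclideanSpace ℝ (Fin d))

lemma gp_comp (hσ : 0 < σ) (y : Fin d → ℝ) :
    gaussianProposal d σ ((MeasurableEquiv.toLp 2 (Fin d → ℝ)) y) θt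
      = ∏ i, phi1 σ (θt i) (y i) := by
  rw [gaussianProposal_eq_prod d σ hσ]
  rfl

lemma gp_integrable (hσ : 0 < σ) :
    Integrable (fun θ : EuclideanSpace ℝ (Fin d) => gaussianProposal d σ θ θt) := by
  have hE : MeasurePreserving (MeasurableEquiv.toLp 2 (Fin d → ℝ)) :=
    (EuclideanSpace.volume_preserving_symm_measurableEquiv_toLp (Fin d)).symm
  rw [← hE.integrable_comp_emb (MeasurableEquiv.measurableEmbedding _)]
  have : ((fun θ : EuclideanSpace ℝ (Fin d) => gaussianProposal d σ θ θt) ∘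
      (MeasurableEquiv.toLp 2 (Fin d → ℝ)))
      = fun y : Fin d → ℝ => ∏ i, phi1 σ (θt i) (y i) := by
    funext y; exact gp_comp θt hσ y
  rw [this]
  exact Integrable.fintype_prod (fun i => phi1_integrable σ (θt i) hσ)

lemma gp_integral (hσ : 0 < σ) :
    ∫ θ : EuclideanSpace ℝ (Fin d), gaussianProposal d σ θ θt = 1 := by
  have hE : MeasurePreserving (MeasurableEquiv.toLp 2 (Fin d → ℝ)) :=
    (EuclideanSpace.volume_preserving_symm_measurableEquiv_toLp (Fin d)).symm
  rw [← hE.integral_comp (MeasurableEquiv.measurableEmbedding _)]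
  calc ∫ y : Fin d → ℝ, gaussianProposal d σ ((MeasurableEquiv.toLp 2 (Fin d → ℝ)) y) θt
      = ∫ y : Fin d → ℝ, ∏ i, phi1 σ (θt i) (y i) := by
        exact integral_congr_ae (Filter.Eventually.of_forall fun y => gp_comp θt hσ y)
    _ = ∏ i, ∫ t, phi1 σ (θt i) t := integral_fintype_prod_eq_prod _
    _ = 1 := by
        simp [phi1_integral σ _ hσ]

noncomputable def psi1 (σ : ℝ) (θt : EuclideanSpace ℝ (Fin d)) (i j : Fin d) (t : ℝ) : ℝ :=
  phi1 σ (θt j) t * (if j = i then (t - θt j) ^ 2 else 1)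

lemma psi1_integrable (hσ : 0 < σ) (i j : Fin d) : Integrable (psi1 σ θt i j) := by
  have he : psi1 σ θt i j = fun t => phi1 σ (θt j) t * (if j = i then (t - θt j) ^ 2 else 1) := rfl
  rw [he]
  by_cases h : j = i
  · subst h
    simp only [if_true]
    exact phi1_sq_integrable σ _ hσ
  · simp only [if_neg h, mul_one]
    exact phi1_integrable σ _ hσ

lemma psi1_integral (hσ : 0 < σ) (i j : Fin d) :
    ∫ t, psi1 σ θt i j t = if j = i then σ ^ 2 else 1 := by
  have he : psi1 σ θt i j = fun t => phi1 σ (θt j) t * (if j = i then (t - θt j) ^ 2 else 1) := rfl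
  rw [he]
  by_cases h : j = i
  · subst h
    simp only [if_true]
    exact phi1_sq_integral σ _ hσ
  · simp only [if_neg h, mul_one]
    exact phi1_integral σ _ hσ

lemma gp_sq_comp (hσ : 0 < σ) (y : Fin d → ℝ) :
    gaussianProposal d σ ((MeasurableEquiv.toLp 2 (Fin d → ℝ)) y) θt *
        ‖(MeasurableEquiv.toLp 2 (Fin d → ℝ)) y - θt‖ ^ 2
      = ∑ i, ∏ j, psi1 σ θt i j (y j) := by
  rw [gp_comp θt hσ y, euclidean_norm_sq, Finset.mul_sum]
  refine Finset.sum_congr rfl fun i _ => ?_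
  unfold psi1
  rw [Finset.prod_mul_distrib]
  congr 1
  simp only [Finset.prod_ite_eq', Finset.mem_univ, if_true]
  rfl

lemma gp_sq_integrable (hσ : 0 < σ) :
    Integrable (fun θ : EuclideanSpace ℝ (Fin d) =>
      gaussianProposal d σ θ θt * ‖θ - θt‖ ^ 2) := by
  have hE : MeasurePreserving (MeasurableEquiv.toLp 2 (Fin d → ℝ)) :=
    (EuclideanSpace.volume_preserving_symm_measurableEquiv_toLp (Fin d)).symm
  rw [← hE.integrable_comp_emb (MeasurableEquiv.measurableEmbedding _)]
  have : ((fun θ : EuclideanSpace ℝ (Fin d) => gaussianProposal d σ θ θt * ‖θ - θt‖ ^ 2) ∘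
      (MeasurableEquiv.toLp 2 (Fin d → ℝ)))
      = fun y : Fin d → ℝ => ∑ i, ∏ j, psi1 σ θt i j (y j) := by
    funext y; exact gp_sq_comp θt hσ y
  rw [this]
  exact integrable_finset_sum _ fun i _ =>
    Integrable.fintype_prod (fun j => psi1_integrable θt hσ i j)

lemma gp_sq_integral (hσ : 0 < σ) :
    ∫ θ : EuclideanSpace ℝ (Fin d), gaussianProposal d σ θ θt * ‖θ - θt‖ ^ 2
      = d * σ ^ 2 := by
  have hE : MeasurePreserving (MeasurableEquiv.toLp 2 (Fin d → ℝ)) :=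
    (EuclideanSpace.volume_preserving_symm_measurableEquiv_toLp (Fin d)).symm
  rw [← hE.integral_comp (MeasurableEquiv.measurableEmbedding _)]
  calc ∫ y : Fin d → ℝ, gaussianProposal d σ ((MeasurableEquiv.toLp 2 (Fin d → ℝ)) y) θt *
        ‖(MeasurableEquiv.toLp 2 (Fin d → ℝ)) y - θt‖ ^ 2
      = ∫ y : Fin d → ℝ, ∑ i, ∏ j, psi1 σ θt i j (y j) := by
        exact integral_congr_ae (Filter.Eventually.of_forall fun y => gp_sq_comp θt hσ y)
    _ = ∑ i : Fin d, ∫ y : Fin d → ℝ, ∏ j, psi1 σ θt i j (y j) :=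
        integral_finset_sum _ fun i _ =>
          Integrable.fintype_prod (fun j => psi1_integrable θt hσ i j)
    _ = ∑ i : Fin d, ∏ j, ∫ t, psi1 σ θt i j t := by
        refine Finset.sum_congr rfl fun i _ => integral_fintype_prod_eq_prod _
    _ = ∑ i : Fin d, σ ^ 2 := by
        refine Finset.sum_congr rfl fun i _ => ?_
        rw [Finset.prod_congr rfl fun j _ => psi1_integral θt hσ i j]
        simp
    _ = d * σ ^ 2 := by simp [Finset.card_univ, mul_comm]
end Multi
end Aux

/-- **Pointwise bias bound for the Bayes-optimal FSM estimator** (Step 1 of the proof of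
Theorem 4 of the paper): the deviation of the posterior mean of the Fisher score from the
true Fisher score at `θt` is at most `L √d σ M`, where `M = sup_θ p(x|θ)/Z`, which equals
`sup_θ π(θ)/q_σ(θ|θt)`. -/
theorem fsm_pointwise_bias_bound
    (d k : ℕ) (hd : 0 < d) (hk : 0 < k)
    (x : EuclideanSpace ℝ (Fin k)) (θt : EuclideanSpace ℝ (Fin d))
    (σ L : ℝ) (hσ : 0 < σ) (hL : 0 ≤ L)
    -- `p θ x'` is the likelihood family `p(x'|θ)`
    (p : EuclideanSpace ℝ (Fin d) → EuclideanSpace ℝ (Fin k) → ℝ)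
    (hp_meas : Measurable (Function.uncurry p))
    (hp_pos : ∀ θ x', 0 < p θ x')
    (hp_prob : ∀ θ, ∫ x', p θ x' = 1)
    -- `g = ∇_θ log p(x|·)`, an `L`-Lipschitz gradient
    (g : EuclideanSpace ℝ (Fin d) → EuclideanSpace ℝ (Fin d))
    (hg : ∀ θ, HasGradientAt (fun θ' => Real.log (p θ' x)) (g θ) θ)
    (hgLip : LipschitzWith (Real.toNNReal L) g)
    -- the normalizing constant `Z ∈ (0, ∞)`
    (Z : ℝ) (hZ : Z = ∫ θ, p θ x * gaussianProposal d σ θ θt)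
    (hZ_int : Integrable (fun θ => p θ x * gaussianProposal d σ θ θt))
    (hZ_pos : 0 < Z)
    -- the induced posterior density
    (pi : EuclideanSpace ℝ (Fin d) → ℝ)
    (hpi : ∀ θ, pi θ = p θ x * gaussianProposal d σ θ θt / Z)
    -- `M = sup_θ p(x|θ)/Z`, assumed finite
    (M : ℝ) (hM : M = ⨆ θ : EuclideanSpace ℝ (Fin d), p θ x / Z)
    (hMbdd : BddAbove (Set.range fun θ : EuclideanSpace ℝ (Fin d) => p θ x / Z))
    -- `θ ↦ ‖g(x;θ)‖` is π-integrable
    (hg_int : Integrable (fun θ => ‖g θ‖ * pi θ)) :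
    ‖(∫ θ, pi θ • g θ) - g θt‖ ≤ L * Real.sqrt d * σ * M
      ∧ M = ⨆ θ : EuclideanSpace ℝ (Fin d), pi θ / gaussianProposal d σ θ θt := by
  have hq_pos : ∀ θ : EuclideanSpace ℝ (Fin d), 0 < gaussianProposal d σ θ θt := by
    intro θ
    unfold gaussianProposal
    have h2 : (0:ℝ) < 2 * Real.pi * σ ^ 2 := by positivity
    positivity
  constructor
  · -- main bound
    have hMle : ∀ θ, pi θ ≤ M * gaussianProposal d σ θ θt := by
      intro θ
      have h1 : p θ x / Z ≤ M := hM ▸ le_ciSup hMbdd θ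
      calc pi θ = (p θ x / Z) * gaussianProposal d σ θ θt := by rw [hpi]; ring
        _ ≤ M * gaussianProposal d σ θ θt :=
            mul_le_mul_of_nonneg_right h1 (hq_pos θ).le
    have hM0 : 0 ≤ M :=
      le_trans (div_pos (hp_pos θt x) hZ_pos).le (hM ▸ le_ciSup hMbdd θt)
    have hpi_nonneg : ∀ θ, 0 ≤ pi θ := fun θ => by
      rw [hpi]
      exact (div_pos (mul_pos (hp_pos θ x) (hq_pos θ)) hZ_pos).le
    have hpi_int : Integrable pi :=
      (hZ_int.div_const Z).congr (Filter.Eventually.of_forall fun θ => (hpi θ).symm)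
    have hpi_one : ∫ θ, pi θ = 1 := by
      rw [integral_congr_ae (Filter.Eventually.of_forall hpi), integral_div, ← hZ,
        div_self hZ_pos.ne']
    have hq_cont : Continuous (fun θ : EuclideanSpace ℝ (Fin d) => gaussianProposal d σ θ θt) := by
      unfold gaussianProposal
      exact continuous_const.mul
        ((((continuous_id.sub continuous_const).norm.pow 2).neg.div_const _).rexp)
    have hpm : Measurable pi := by
      have h1 : Measurable (fun θ : EuclideanSpace ℝ (Fin d) => p θ x) :=
        hp_meas.comp (measurable_id.prodMk measurable_const)
      have h2 : Measurable fun θ => p θ x * gaussianProposal d σ θ θt / Z :=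
        (h1.mul hq_cont.measurable).div_const Z
      exact (funext hpi : pi = _) ▸ h2
    have hsm : AEStronglyMeasurable (fun θ => pi θ • g θ) volume :=
      hpm.aestronglyMeasurable.smul hgLip.continuous.measurable.aestronglyMeasurable
    have hint_smul : Integrable (fun θ => pi θ • g θ) := by
      refine hg_int.mono' hsm (Filter.Eventually.of_forall fun θ => ?_)
      rw [norm_smul, Real.norm_eq_abs, abs_of_nonneg (hpi_nonneg θ), mul_comm]
    have hint_smul_const : Integrable (fun θ => pi θ • g θt) := hpi_int.smul_const (g θt)
    have key : (∫ θ, pi θ • g θ) - g θt = ∫ θ, pi θ • (g θ - g θt) := by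
      have he : (fun θ => pi θ • (g θ - g θt)) = fun θ => pi θ • g θ - pi θ • g θt :=
        funext fun θ => smul_sub _ _ _
      rw [he, integral_sub hint_smul hint_smul_const, integral_smul_const, hpi_one, one_smul]
    set c := Real.sqrt d * σ with hc
    have hc_pos : 0 < c := mul_pos (Real.sqrt_pos.2 (by exact_mod_cast hd)) hσ
    have hc2 : c ^ 2 = d * σ ^ 2 := by
      rw [hc, mul_pow, Real.sq_sqrt (Nat.cast_nonneg d)]
    have hupper_int : Integrable (fun θ => L * M *
        (gaussianProposal d σ θ θt * ‖θ - θt‖ ^ 2 / (2 * c)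
          + gaussianProposal d σ θ θt * (c / 2))) :=
      (((gp_sq_integrable θt hσ).div_const _).add ((gp_integrable θt hσ).mul_const _)).const_mul _
    have hptwise : ∀ θ, ‖pi θ • (g θ - g θt)‖ ≤ L * M *
        (gaussianProposal d σ θ θt * ‖θ - θt‖ ^ 2 / (2 * c)
          + gaussianProposal d σ θ θt * (c / 2)) := by
      intro θ
      have hlip : ‖g θ - g θt‖ ≤ L * ‖θ - θt‖ := by
        have := hgLip.dist_le_mul θ θt
        rwa [dist_eq_norm, dist_eq_norm, Real.coe_toNNReal L hL] at this
      have hamgm : ‖θ - θt‖ ≤ ‖θ - θt‖ ^ 2 / (2 * c) + c / 2 := by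
        have h2 : ‖θ - θt‖ * (2 * c) ≤ ‖θ - θt‖ ^ 2 + c * c := by
          nlinarith [sq_nonneg (‖θ - θt‖ - c)]
        have h3 := (le_div_iff₀ (by positivity : (0:ℝ) < 2 * c)).2 h2
        calc ‖θ - θt‖ ≤ (‖θ - θt‖ ^ 2 + c * c) / (2 * c) := h3
          _ = ‖θ - θt‖ ^ 2 / (2 * c) + c / 2 := by
              field_simp
      calc ‖pi θ • (g θ - g θt)‖ = pi θ * ‖g θ - g θt‖ := by
            rw [norm_smul, Real.norm_eq_abs, abs_of_nonneg (hpi_nonneg θ)]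
        _ ≤ (M * gaussianProposal d σ θ θt) * (L * (‖θ - θt‖ ^ 2 / (2 * c) + c / 2)) := by
            refine mul_le_mul (hMle θ) (hlip.trans ?_) (norm_nonneg _)
              (mul_nonneg hM0 (hq_pos θ).le)
            exact mul_le_mul_of_nonneg_left hamgm hL
        _ = L * M * (gaussianProposal d σ θ θt * ‖θ - θt‖ ^ 2 / (2 * c)
              + gaussianProposal d σ θ θt * (c / 2)) := by ring
    have hnorm := norm_integral_le_of_norm_le hupper_int (Filter.Eventually.of_forall hptwise)
    have hval : ∫ θ, L * M *
        (gaussianProposal d σ θ θt * ‖θ - θt‖ ^ 2 / (2 * c)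
          + gaussianProposal d σ θ θt * (c / 2)) = L * M * c := by
      rw [integral_const_mul, integral_add (((gp_sq_integrable θt hσ).div_const _))
        ((gp_integrable θt hσ).mul_const _), integral_div, integral_mul_const,
        gp_sq_integral θt hσ, gp_integral θt hσ]
      have : (d : ℝ) * σ ^ 2 / (2 * c) = c / 2 := by
        rw [← hc2]
        field_simp
      rw [this]
      ring
    rw [key]
    calc ‖∫ θ, pi θ • (g θ - g θt)‖ ≤ _ := hnorm
      _ = L * M * c := hval
      _ = L * Real.sqrt d * σ * M := by rw [hc]; ring
  · -- second conjunct
    rw [hM]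
    congr 1
    funext θ
    rw [hpi θ, div_right_comm, mul_div_assoc, div_self (hq_pos θ).ne', mul_one]
end

section
/- Fix θ*, θ_t ∈ ℝ^d, σ > 0 and L ≥ 0. Let p be a likelihood family such that for every x ∈ ℝ^k the map θ ↦ log p(x|θ) is differentiable with L-Lipschitz gradient g(x;·) = ∇_θ log p(x|·). For each x define Z_σ(θ_t;x) = ∫ p(x|θ) q_σ(θ|θ_t) dθ ∈ (0,∞), the posterior π_{θ_t}(θ|x) = p(x|θ) q_σ(θ|θ_t)/Z_σ(θ_t;x), the optimal FSM estimator S*(x;θ_t) = ∫ g(x;θ) π_{θ_t}(θ|x) dθ (assumed well-defined), and M(x) = sup_{θ∈ℝ^d} p(x|θ)/Z_σ(θ_t;x), assumed finite for almost every x and integrable with respect to the density p(·|θ*). Then, with x₀ distributed with density p(·|θ*), E_{x₀}‖ S*(x₀;θ_t) − g(x₀;θ_t) ‖ ≤ L · √d · σ · E_{x₀}[ M(x₀) ]. -/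
open MeasureTheory

section FSMAux
open Real

variable {d : ℕ}

local notation "V" => EuclideanSpace ℝ (Fin d)

lemma fsm_gauss_integrable {b : ℝ} (hb : 0 < b) :
    Integrable (fun v : V => Real.exp (-b * ‖v‖ ^ 2)) := by
  have h := (GaussianFourier.integrable_cexp_neg_mul_sq_norm_add
      (b := (b : ℂ)) (by simpa using hb) 0 (0 : EuclideanSpace ℝ (Fin d))).norm
  simpa [Complex.norm_exp, ← Complex.ofReal_pow] using h

lemma fsm_sq_le_exp {b t : ℝ} (hb : 0 < b) (ht : 0 ≤ t) :
    t ≤ 2 / b * Real.exp (b / 2 * t) := by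
  have h1 : b / 2 * t + 1 ≤ Real.exp (b / 2 * t) := Real.add_one_le_exp _
  have h2 : 0 < 2 / b := by positivity
  have h3 : 0 < b := hb
  rw [div_mul_eq_mul_div, le_div_iff₀ h3]
  ring_nf at h1 ⊢
  nlinarith [Real.exp_pos (b * t / 2)]

lemma fsm_gauss_sq_integrable {b : ℝ} (hb : 0 < b) :
    Integrable (fun v : V => ‖v‖ ^ 2 * Real.exp (-b * ‖v‖ ^ 2)) := by
  refine Integrable.mono' ((fsm_gauss_integrable (d := d) (b := b / 2)
      (by positivity)).const_mul (2 / b)) ?_ ?_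
  · exact (Continuous.mul (by continuity) (by continuity)).aestronglyMeasurable
  · refine Filter.Eventually.of_forall fun v => ?_
    have h1 : ‖v‖ ^ 2 ≤ 2 / b * Real.exp (b / 2 * ‖v‖ ^ 2) :=
      fsm_sq_le_exp hb (by positivity)
    have h2 : 0 < Real.exp (-b * ‖v‖ ^ 2) := Real.exp_pos _
    have h3 : ‖v‖ ^ 2 * Real.exp (-b * ‖v‖ ^ 2)
        ≤ 2 / b * Real.exp (b / 2 * ‖v‖ ^ 2) * Real.exp (-b * ‖v‖ ^ 2) := by
      exact mul_le_mul_of_nonneg_right h1 h2.le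
    rw [Real.norm_eq_abs, abs_of_nonneg (by positivity)]
    calc ‖v‖ ^ 2 * Real.exp (-b * ‖v‖ ^ 2)
        ≤ 2 / b * Real.exp (b / 2 * ‖v‖ ^ 2) * Real.exp (-b * ‖v‖ ^ 2) := h3
      _ = 2 / b * Real.exp (-(b / 2) * ‖v‖ ^ 2) := by
          rw [mul_assoc, ← Real.exp_add]; ring_nf

lemma fsm_gauss_integral {b : ℝ} (hb : 0 < b) :
    ∫ v : V, Real.exp (-b * ‖v‖ ^ 2) = (π / b) ^ ((d : ℝ) / 2) := by
  rw [GaussianFourier.integral_rexp_neg_mul_sq_norm hb]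
  norm_num [finrank_euclideanSpace_fin]

lemma fsm_gauss_sq_integral (hd : 0 < d) {b : ℝ} (hb : 0 < b) :
    ∫ v : V, ‖v‖ ^ 2 * Real.exp (-b * ‖v‖ ^ 2)
      = (d : ℝ) / (2 * b) * (π / b) ^ ((d : ℝ) / 2) := by
  -- differentiate `x ↦ ∫ exp (-x ‖v‖²)` at `b`
  have hder := hasDerivAt_integral_of_dominated_loc_of_deriv_le
    (F := fun (x : ℝ) (v : V) => Real.exp (-x * ‖v‖ ^ 2))
    (F' := fun (x : ℝ) (v : V) => -‖v‖ ^ 2 * Real.exp (-x * ‖v‖ ^ 2))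
    (x₀ := b) (s := Metric.ball b (b / 2)) (bound := fun v : V => ‖v‖ ^ 2 * Real.exp (-(b / 2) * ‖v‖ ^ 2))
    (Metric.ball_mem_nhds b (by positivity))
    (Filter.Eventually.of_forall fun x =>
      (Continuous.aestronglyMeasurable (by continuity)))
    (fsm_gauss_integrable hb)
    (Continuous.aestronglyMeasurable (by continuity))
    (Filter.Eventually.of_forall fun v => ?_)
    (fsm_gauss_sq_integrable (by positivity))
    (Filter.Eventually.of_forall fun v => ?_)
  · set c : ℝ := (d : ℝ) / 2 with hc
    have hder2 := hder.2
    have hEq : (fun x : ℝ => ∫ v : V, Real.exp (-x * ‖v‖ ^ 2))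
        =ᶠ[nhds b] fun x => π ^ c * x ^ (-c) := by
      filter_upwards [IsOpen.mem_nhds isOpen_Ioi hb] with x hx
      rw [fsm_gauss_integral hx, Real.div_rpow Real.pi_pos.le (le_of_lt hx),
        Real.rpow_neg (le_of_lt hx), div_eq_mul_inv]
    have hH : HasDerivAt (fun x : ℝ => π ^ c * x ^ (-c))
        (π ^ c * (-c * b ^ (-c - 1))) b :=
      (Real.hasDerivAt_rpow_const (Or.inl (ne_of_gt hb))).const_mul _
    have hG : HasDerivAt (fun x : ℝ => ∫ v : V, Real.exp (-x * ‖v‖ ^ 2))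
        (π ^ c * (-c * b ^ (-c - 1))) b := hH.congr_of_eventuallyEq hEq
    have huniq : ∫ v : V, -‖v‖ ^ 2 * Real.exp (-b * ‖v‖ ^ 2)
        = π ^ c * (-c * b ^ (-c - 1)) := hder2.unique hG
    have hneg : ∫ v : V, -‖v‖ ^ 2 * Real.exp (-b * ‖v‖ ^ 2)
        = -∫ v : V, ‖v‖ ^ 2 * Real.exp (-b * ‖v‖ ^ 2) := by
      rw [← integral_neg]; simp
    have hmain : ∫ v : V, ‖v‖ ^ 2 * Real.exp (-b * ‖v‖ ^ 2)
        = π ^ c * (c * b ^ (-c - 1)) := by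
      rw [hneg] at huniq
      have h := congrArg Neg.neg huniq
      simp only [neg_neg] at h
      rw [h]; ring
    rw [hmain, Real.div_rpow Real.pi_pos.le (le_of_lt hb)]
    have hb1 : b ^ (-c - 1) = (b ^ c)⁻¹ * b⁻¹ := by
      rw [show -c - 1 = -c + -1 by ring, Real.rpow_add hb,
        Real.rpow_neg (le_of_lt hb), Real.rpow_neg_one]
    rw [hb1]
    have hbc : (0 : ℝ) < b ^ c := Real.rpow_pos_of_pos hb c
    have hbne : b ≠ 0 := ne_of_gt hb
    have hbcne : b ^ c ≠ 0 := ne_of_gt hbc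
    field_simp
    ring
  · -- bound
    intro x hx
    rw [Metric.mem_ball, Real.dist_eq] at hx
    have hx2 : b / 2 ≤ x := by cases abs_lt.mp hx; linarith
    rw [norm_mul, norm_neg, norm_pow, norm_norm, Real.norm_eq_abs,
      Real.abs_exp]
    refine mul_le_mul_of_nonneg_left (Real.exp_le_exp.2 ?_) (by positivity)
    nlinarith [sq_nonneg ‖v‖]
  · -- differentiability
    intro x hx
    have h1 : HasDerivAt (fun y : ℝ => -y * ‖v‖ ^ 2) (-‖v‖ ^ 2) x := by
      simpa using ((hasDerivAt_id x).neg.mul_const (‖v‖ ^ 2))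
    simpa [mul_comm] using h1.exp



section GaussFacts

variable {σ : ℝ} (hσ : 0 < σ) (θt : EuclideanSpace ℝ (Fin d))

lemma fsm_gp_eq (θ : V) :
    gaussianProposal d σ θ θt
      = (2 * π * σ ^ 2) ^ (-(d : ℝ) / 2)
        * Real.exp (-(1 / (2 * σ ^ 2)) * ‖θ - θt‖ ^ 2) := by
  unfold gaussianProposal
  congr 1
  congr 1
  ring

include hσ

lemma fsm_gp_nonneg (θ : V) : 0 ≤ gaussianProposal d σ θ θt := by
  unfold gaussianProposal
  positivity

lemma fsm_b_pos : (0 : ℝ) < 1 / (2 * σ ^ 2) := by positivity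

lemma fsm_gp_int_one : ∫ θ : V, gaussianProposal d σ θ θt = 1 := by
  simp_rw [fsm_gp_eq θt]
  rw [integral_const_mul,
    integral_sub_right_eq_self
      (fun u : V => Real.exp (-(1 / (2 * σ ^ 2)) * ‖u‖ ^ 2)) θt,
    fsm_gauss_integral (fsm_b_pos hσ)]
  have h1 : π / (1 / (2 * σ ^ 2)) = 2 * π * σ ^ 2 := by
    field_simp
  rw [h1, ← Real.rpow_add (by positivity),
    show -(d : ℝ) / 2 + (d : ℝ) / 2 = 0 by ring, Real.rpow_zero]

lemma fsm_gp_integrable :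
    Integrable (fun θ : V => gaussianProposal d σ θ θt) := by
  simp_rw [fsm_gp_eq θt]
  exact ((fsm_gauss_integrable (fsm_b_pos hσ)).comp_sub_right θt).const_mul _

lemma fsm_gp_sq_integrable :
    Integrable (fun θ : V => gaussianProposal d σ θ θt * ‖θ - θt‖ ^ 2) := by
  simp_rw [fsm_gp_eq θt, mul_assoc, mul_comm
    (Real.exp (-(1 / (2 * σ ^ 2)) * ‖_ - θt‖ ^ 2))]
  exact (((fsm_gauss_sq_integrable (fsm_b_pos hσ)).comp_sub_right θt).const_mul _)

lemma fsm_gp_sq_int (hd : 0 < d) :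
    ∫ θ : V, gaussianProposal d σ θ θt * ‖θ - θt‖ ^ 2 = d * σ ^ 2 := by
  simp_rw [fsm_gp_eq θt, mul_assoc, mul_comm
    (Real.exp (-(1 / (2 * σ ^ 2)) * ‖_ - θt‖ ^ 2))]
  rw [integral_const_mul,
    integral_sub_right_eq_self
      (fun u : V => ‖u‖ ^ 2 * Real.exp (-(1 / (2 * σ ^ 2)) * ‖u‖ ^ 2)) θt,
    fsm_gauss_sq_integral hd (fsm_b_pos hσ)]
  have h1 : π / (1 / (2 * σ ^ 2)) = 2 * π * σ ^ 2 := by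
    field_simp
  have h2 : (d : ℝ) / (2 * (1 / (2 * σ ^ 2))) = d * σ ^ 2 := by
    field_simp
  have hone : (2 * π * σ ^ 2) ^ (-(d : ℝ) / 2) * (2 * π * σ ^ 2) ^ ((d : ℝ) / 2)
      = 1 := by
    rw [← Real.rpow_add (by positivity),
      show -(d : ℝ) / 2 + (d : ℝ) / 2 = 0 by ring, Real.rpow_zero]
  rw [h1, h2, show (2 * (π * σ ^ 2) : ℝ) = 2 * π * σ ^ 2 by ring,
    mul_comm ((d : ℝ) * σ ^ 2), ← mul_assoc, hone, one_mul]

lemma fsm_gp_abs_integrable :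
    Integrable (fun θ : V => gaussianProposal d σ θ θt * ‖θ - θt‖) := by
  refine Integrable.mono' ((fsm_gp_integrable hσ θt).add (fsm_gp_sq_integrable hσ θt))
    ?_ (Filter.Eventually.of_forall fun θ => ?_)
  · apply Continuous.aestronglyMeasurable
    apply Continuous.mul ?_ (by continuity)
    unfold gaussianProposal
    continuity
  · have hq := fsm_gp_nonneg hσ θt θ
    rw [Real.norm_eq_abs, abs_of_nonneg (by positivity), Pi.add_apply]
    nlinarith [sq_nonneg (‖θ - θt‖ - 1), norm_nonneg (θ - θt)]

lemma fsm_gp_abs_int_le (hd : 0 < d) :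
    ∫ θ : V, gaussianProposal d σ θ θt * ‖θ - θt‖ ≤ Real.sqrt d * σ := by
  set t : ℝ := Real.sqrt d * σ with htdef
  have ht : 0 < t := by
    have : (0 : ℝ) < Real.sqrt d := Real.sqrt_pos.2 (by exact_mod_cast hd)
    positivity
  have ht2 : t ^ 2 = d * σ ^ 2 := by
    rw [htdef, mul_pow, Real.sq_sqrt (by positivity : (0:ℝ) ≤ (d:ℝ))]
  have hle : ∫ θ : V, gaussianProposal d σ θ θt * ‖θ - θt‖
      ≤ ∫ θ : V, (gaussianProposal d σ θ θt * ‖θ - θt‖ ^ 2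
          + t ^ 2 * gaussianProposal d σ θ θt) / (2 * t) := by
    refine integral_mono (fsm_gp_abs_integrable hσ θt)
      (((fsm_gp_sq_integrable hσ θt).add
        ((fsm_gp_integrable hσ θt).const_mul _)).div_const _) fun θ => ?_
    have hq := fsm_gp_nonneg hσ θt θ
    rw [le_div_iff₀ (by positivity)]
    nlinarith [mul_nonneg hq (sq_nonneg (‖θ - θt‖ - t))]
  refine hle.trans (le_of_eq ?_)
  rw [integral_div, integral_add (fsm_gp_sq_integrable hσ θt)
      ((fsm_gp_integrable hσ θt).const_mul _),
    fsm_gp_sq_int hσ θt hd, integral_const_mul, fsm_gp_int_one hσ θt, mul_one,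
    ht2]
  rw [← ht2]
  field_simp
  ring

end GaussFacts


end FSMAux

/-- **Bias characterization of the FSM estimator** (Theorem 4 of the paper, rigorous form):
with `x₀` distributed with density `p(·|θ*)`, the expected bias of the Bayes-optimal FSM
estimator satisfies `E‖S*(x₀;θt) − g(x₀;θt)‖ ≤ L √d σ E[M(x₀)]`, where
`M(x) = sup_θ p(x|θ)/Z_σ(θt;x)`. -/
theorem fsm_bias_characterization
    (d k : ℕ) (hd : 0 < d) (hk : 0 < k)
    (θstar θt : EuclideanSpace ℝ (Fin d))
    (σ L : ℝ) (hσ : 0 < σ) (hL : 0 ≤ L)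
    -- `p θ x` is the likelihood family `p(x|θ)`
    (p : EuclideanSpace ℝ (Fin d) → EuclideanSpace ℝ (Fin k) → ℝ)
    (hp_meas : Measurable (Function.uncurry p))
    (hp_pos : ∀ θ x, 0 < p θ x)
    (hp_prob : ∀ θ, ∫ x, p θ x = 1)
    -- `g x = ∇_θ log p(x|·)`, with `L`-Lipschitz gradient for every `x`
    (g : EuclideanSpace ℝ (Fin k) → EuclideanSpace ℝ (Fin d) → EuclideanSpace ℝ (Fin d))
    (hg : ∀ x θ, HasGradientAt (fun θ' => Real.log (p θ' x)) (g x θ) θ)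
    (hgLip : ∀ x, LipschitzWith (Real.toNNReal L) (g x))
    -- the normalizing constants `Z_σ(θt; x) ∈ (0, ∞)`
    (Z : EuclideanSpace ℝ (Fin k) → ℝ)
    (hZ : ∀ x, Z x = ∫ θ, p θ x * gaussianProposal d σ θ θt)
    (hZ_int : ∀ x, Integrable (fun θ => p θ x * gaussianProposal d σ θ θt))
    (hZ_pos : ∀ x, 0 < Z x)
    -- the optimal FSM estimator `S*(x; θt)`, assumed well-defined
    (Sstar : EuclideanSpace ℝ (Fin k) → EuclideanSpace ℝ (Fin d))
    (hSstar : ∀ x, Sstar x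
      = ∫ θ, (p θ x * gaussianProposal d σ θ θt / Z x) • g x θ)
    (hSstar_int : ∀ x,
      Integrable (fun θ => (p θ x * gaussianProposal d σ θ θt / Z x) • g x θ))
    -- `M(x) = sup_θ p(x|θ)/Z_σ(θt;x)`, finite for a.e. x and integrable w.r.t. `p(·|θ*)`
    (M : EuclideanSpace ℝ (Fin k) → ℝ)
    (hM : ∀ x, M x = ⨆ θ : EuclideanSpace ℝ (Fin d), p θ x / Z x)
    (hM_fin : ∀ᵐ x, BddAbove (Set.range fun θ : EuclideanSpace ℝ (Fin d) => p θ x / Z x))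
    (hM_int : Integrable (fun x => M x * p θstar x)) :
    ∫⁻ x, ENNReal.ofReal (‖Sstar x - g x θt‖ * p θstar x)
      ≤ ENNReal.ofReal (L * Real.sqrt d * σ)
          * ∫⁻ x, ENNReal.ofReal (M x * p θstar x) := by
  have hc : (0 : ℝ) ≤ L * Real.sqrt d * σ := by positivity
  -- the key pointwise estimate
  have key : ∀ x, BddAbove (Set.range fun θ : EuclideanSpace ℝ (Fin d) => p θ x / Z x) →
      ‖Sstar x - g x θt‖ ≤ L * Real.sqrt d * σ * M x := by
    intro x hBdd
    set q : EuclideanSpace ℝ (Fin d) → ℝ := fun θ => gaussianProposal d σ θ θt with hq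
    set c : EuclideanSpace ℝ (Fin d) → ℝ := fun θ => p θ x * q θ / Z x with hcdef
    have hZx := hZ_pos x
    have hq_nonneg : ∀ θ, 0 ≤ q θ := fun θ => fsm_gp_nonneg hσ θt θ
    have hc_nonneg : ∀ θ, 0 ≤ c θ := fun θ => by
      have := (hp_pos θ x).le
      have := hq_nonneg θ
      positivity
    have hc_int : Integrable c := (hZ_int x).div_const (Z x)
    have hc_one : ∫ θ, c θ = 1 := by
      simp only [hcdef]
      rw [integral_div, ← hZ x, div_self (ne_of_gt hZx)]
    have hMx_ge : ∀ θ, p θ x / Z x ≤ M x := fun θ => by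
      rw [hM x]; exact le_ciSup hBdd θ
    have hMx_nonneg : 0 ≤ M x :=
      le_trans (div_nonneg (hp_pos θt x).le hZx.le) (hMx_ge θt)
    -- rewrite the difference as a single integral
    have hsub : Sstar x - g x θt = ∫ θ, c θ • (g x θ - g x θt) := by
      have h2 : (∫ θ, c θ • g x θt) = g x θt := by
        rw [integral_smul_const, hc_one, one_smul]
      have h3 : Integrable (fun θ => c θ • g x θt) := hc_int.smul_const _
      rw [hSstar x]
      have h4 : (fun θ => c θ • (g x θ - g x θt))
          = fun θ => (p θ x * q θ / Z x) • g x θ - c θ • g x θt := by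
        funext θ; rw [smul_sub]
      rw [h4, integral_sub (hSstar_int x) h3, h2]
    rw [hsub]
    -- bound the norm of the integral
    calc ‖∫ θ, c θ • (g x θ - g x θt)‖
        ≤ ∫ θ, ‖c θ • (g x θ - g x θt)‖ := norm_integral_le_integral_norm _
      _ ≤ ∫ θ, L * M x * (q θ * ‖θ - θt‖) := by
          refine integral_mono_of_nonneg
            (Filter.Eventually.of_forall fun θ => norm_nonneg _)
            (((fsm_gp_abs_integrable hσ θt).const_mul (L * M x)))
            (Filter.Eventually.of_forall fun θ => ?_)
          have hlip : ‖g x θ - g x θt‖ ≤ L * ‖θ - θt‖ := by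
            have h := (hgLip x).dist_le_mul θ θt
            rw [Real.coe_toNNReal L hL] at h
            simpa [dist_eq_norm] using h
          have hcle : c θ ≤ M x * q θ := by
            have h1 : c θ = p θ x / Z x * q θ := by
              simp only [hcdef]; ring
            rw [h1]
            exact mul_le_mul_of_nonneg_right (hMx_ge θ) (hq_nonneg θ)
          show ‖c θ • (g x θ - g x θt)‖ ≤ L * M x * (q θ * ‖θ - θt‖)
          rw [norm_smul, Real.norm_eq_abs, abs_of_nonneg (hc_nonneg θ)]
          calc c θ * ‖g x θ - g x θt‖
              ≤ (M x * q θ) * (L * ‖θ - θt‖) :=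
                mul_le_mul hcle hlip (norm_nonneg _)
                  (mul_nonneg hMx_nonneg (hq_nonneg θ))
            _ = L * M x * (q θ * ‖θ - θt‖) := by ring
      _ = L * M x * ∫ θ, q θ * ‖θ - θt‖ := integral_const_mul _ _
      _ ≤ L * M x * (Real.sqrt d * σ) := by
          exact mul_le_mul_of_nonneg_left (fsm_gp_abs_int_le hσ θt hd)
            (mul_nonneg hL hMx_nonneg)
      _ = L * Real.sqrt d * σ * M x := by ring
  refine le_trans (lintegral_mono_ae ?_) (le_of_eq (lintegral_const_mul' _ _
    ENNReal.ofReal_ne_top))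
  filter_upwards [hM_fin] with x hBdd
  rw [← ENNReal.ofReal_mul hc]
  refine ENNReal.ofReal_le_ofReal ?_
  rw [← mul_assoc]
  exact mul_le_mul_of_nonneg_right (key x hBdd) (hp_pos θstar x).le
end

section
/- Fix x ∈ ℝ^k, σ > 0, L ≥ 0 and μ > 0. Let p be a likelihood family such that ℓ(θ) = log p(x|θ) is differentiable, μ-strongly concave (θ ↦ ℓ(θ) + (μ/2)‖θ‖² is concave), and has L-Lipschitz gradient g = ∇ℓ. Let q_σ(θ|θ_t) = (2πσ²)^{−d/2} exp(−‖θ−θ_t‖²/(2σ²)), Z_σ(θ_t) = ∫ p(x|θ) q_σ(θ|θ_t) dθ ∈ (0,∞), and π_{θ_t}(θ) = p(x|θ) q_σ(θ|θ_t)/Z_σ(θ_t). Suppose θ̂ ∈ ℝ^d satisfies g(θ̂) = 0 (the maximum likelihood estimator) and θ̂_σ ∈ ℝ^d satisfies ∫ g(θ) π_{θ̂_σ}(θ) dθ = 0 (the smoothed maximum likelihood estimator, a zero of the Bayes-optimal FSM score), with g being π_{θ̂_σ}-integrable and M = sup_θ p(x|θ)/Z_σ(θ̂_σ) < ∞. Then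 ‖θ̂_σ − θ̂‖ ≤ (L √d σ / μ) · M. -/
open MeasureTheory

namespace SmoothedMLEAux

open Real Set

noncomputable def gauss1 (σ t : ℝ) : ℝ :=
  (2 * π * σ ^ 2) ^ (-(1:ℝ)/2) * Real.exp (-t ^ 2 / (2 * σ ^ 2))

lemma exp_form {σ : ℝ} (hσ : 0 < σ) (t : ℝ) :
    Real.exp (-t ^ 2 / (2 * σ ^ 2)) = Real.exp (-(2 * σ ^ 2)⁻¹ * t ^ 2) := by
  congr 1; field_simp

lemma gauss1_integrable {σ : ℝ} (hσ : 0 < σ) : Integrable (gauss1 σ) := by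
  have hb : 0 < (2 * σ ^ 2)⁻¹ := by positivity
  unfold gauss1
  simp_rw [exp_form hσ]
  exact (integrable_exp_neg_mul_sq hb).const_mul _

lemma gauss1_integral {σ : ℝ} (hσ : 0 < σ) : ∫ t, gauss1 σ t = 1 := by
  have hb : 0 < (2 * σ ^ 2)⁻¹ := by positivity
  have hpos : (0:ℝ) < 2 * π * σ ^ 2 := by positivity
  unfold gauss1
  simp_rw [exp_form hσ]
  rw [integral_const_mul, integral_gaussian]
  have : π / (2 * σ ^ 2)⁻¹ = 2 * π * σ ^ 2 := by field_simp
  rw [this, Real.sqrt_eq_rpow, ← Real.rpow_add hpos]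
  norm_num

lemma gauss1_sq_integrable {σ : ℝ} (hσ : 0 < σ) :
    Integrable (fun t => t ^ 2 * gauss1 σ t) := by
  have hb : 0 < (2 * σ ^ 2)⁻¹ := by positivity
  unfold gauss1
  have := (integrable_rpow_mul_exp_neg_mul_sq hb (s := 2) (by norm_num)).const_mul
    ((2 * π * σ ^ 2) ^ (-(1:ℝ)/2))
  refine this.congr (Filter.Eventually.of_forall fun t => ?_)
  dsimp only
  rw [exp_form hσ t, show (2:ℝ) = ((2:ℕ):ℝ) by norm_num, Real.rpow_natCast]
  ring

lemma sq_exp_integral {b : ℝ} (hb : 0 < b) :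
    ∫ x : ℝ, x ^ 2 * Real.exp (-b * x ^ 2) = (1 / b) ^ ((3:ℝ)/2) * Real.sqrt π / 2 := by
  have h1 : ∫ x : ℝ, x ^ 2 * Real.exp (-b * x ^ 2)
      = 2 * ∫ x in Ioi (0:ℝ), x ^ 2 * Real.exp (-b * x ^ 2) := by
    rw [← integral_comp_abs (f := fun x => x ^ 2 * Real.exp (-b * x ^ 2))]
    congr 1; ext x; rw [sq_abs]
  have h2 : ∫ x in Ioi (0:ℝ), x ^ 2 * Real.exp (-b * x ^ 2)
      = ∫ y in Ioi (0:ℝ), (y ^ ((1:ℝ)/2) * Real.exp (-(b * y))) / 2 := by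
    rw [← integral_comp_rpow_Ioi_of_pos
      (g := fun y => (y ^ ((1:ℝ)/2) * Real.exp (-(b * y))) / 2) (p := 2) two_pos]
    refine setIntegral_congr_fun measurableSet_Ioi (fun x hx => ?_)
    have hx' : (0:ℝ) < x := hx
    have hx2 : x ^ ((2:ℝ)) = x ^ (2:ℕ) := by
      rw [← Real.rpow_natCast x 2]; norm_num
    have key : ((x:ℝ) ^ (2:ℕ)) ^ ((1:ℝ)/2) = x := by
      rw [← Real.rpow_natCast x 2, ← Real.rpow_mul hx'.le]; norm_num
    simp only [smul_eq_mul, hx2, key]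
    ring_nf
    rw [Real.rpow_one]
    ring
  have h3 : ∫ y in Ioi (0:ℝ), y ^ ((1:ℝ)/2) * Real.exp (-(b * y))
      = (1 / b) ^ ((3:ℝ)/2) * Real.Gamma ((3:ℝ)/2) := by
    have := Real.integral_rpow_mul_exp_neg_mul_Ioi (a := (3:ℝ)/2) (r := b) (by norm_num) hb
    rw [show (3:ℝ)/2 - 1 = 1/2 by norm_num] at this
    exact this
  have hG : Real.Gamma ((3:ℝ)/2) = Real.sqrt π / 2 := by
    rw [show (3:ℝ)/2 = 1/2 + 1 by norm_num, Real.Gamma_add_one (by norm_num),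
      Real.Gamma_one_half_eq]
    ring
  rw [h1, h2, integral_div, h3, hG]
  ring

lemma gauss1_sq_integral {σ : ℝ} (hσ : 0 < σ) :
    ∫ t, t ^ 2 * gauss1 σ t = σ ^ 2 := by
  have hb : 0 < (2 * σ ^ 2)⁻¹ := by positivity
  unfold gauss1
  simp_rw [exp_form hσ]
  have : ∀ t : ℝ, t ^ 2 * ((2 * π * σ ^ 2) ^ (-(1:ℝ)/2) * Real.exp (-(2 * σ ^ 2)⁻¹ * t ^ 2))
      = (2 * π * σ ^ 2) ^ (-(1:ℝ)/2) * (t ^ 2 * Real.exp (-(2 * σ ^ 2)⁻¹ * t ^ 2)) := by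
    intro t; ring
  simp_rw [this]
  rw [integral_const_mul, sq_exp_integral hb]
  have h1 : (1 / (2 * σ ^ 2)⁻¹ : ℝ) = 2 * σ ^ 2 := by field_simp
  rw [h1]
  have h2 : (2 * π * σ ^ 2 : ℝ) = (2 * σ ^ 2) * π := by ring
  have hs : (0:ℝ) < 2 * σ ^ 2 := by positivity
  rw [h2, Real.mul_rpow hs.le Real.pi_pos.le, Real.sqrt_eq_rpow]
  have e1 : (2 * σ ^ 2 : ℝ) ^ (-(1:ℝ)/2) * (2 * σ ^ 2) ^ ((3:ℝ)/2) = 2 * σ ^ 2 := by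
    rw [← Real.rpow_add hs]; norm_num
  have e2 : (π : ℝ) ^ (-(1:ℝ)/2) * π ^ ((1:ℝ)/2) = 1 := by
    rw [← Real.rpow_add Real.pi_pos]; norm_num
  calc (2 * σ ^ 2) ^ (-(1:ℝ)/2) * π ^ (-(1:ℝ)/2) * ((2 * σ ^ 2) ^ ((3:ℝ)/2) * π ^ ((1:ℝ)/2) / 2)
      = ((2 * σ ^ 2) ^ (-(1:ℝ)/2) * (2 * σ ^ 2) ^ ((3:ℝ)/2)) * (π ^ (-(1:ℝ)/2) * π ^ ((1:ℝ)/2)) / 2 := by ring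
    _ = σ ^ 2 := by rw [e1, e2]; ring

variable {d : ℕ} {σ : ℝ}

lemma norm_sub_sq_eq_sum (θ c : EuclideanSpace ℝ (Fin d)) :
    ‖θ - c‖ ^ 2 = ∑ i, (θ i - c i) ^ 2 := by
  rw [EuclideanSpace.norm_eq, Real.sq_sqrt (by positivity)]
  simp [PiLp.sub_apply]

lemma gp_prod (hσ : 0 < σ) (c θ : EuclideanSpace ℝ (Fin d)) :
    gaussianProposal d σ θ c = ∏ i, gauss1 σ (θ i - c i) := by
  unfold gaussianProposal gauss1
  rw [Finset.prod_mul_distrib, Finset.prod_const, ← Real.exp_sum]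
  have hpos : (0:ℝ) < 2 * π * σ ^ 2 := by positivity
  congr 1
  · rw [← Real.rpow_natCast ((2 * π * σ ^ 2) ^ (-(1:ℝ)/2)) _, ← Real.rpow_mul hpos.le]
    congr 1
    simp [Finset.card_univ]
    ring
  · rw [norm_sub_sq_eq_sum]
    congr 1
    rw [neg_div, Finset.sum_div, ← Finset.sum_neg_distrib]
    congr 1; ext i; ring

lemma euclid_integral_eq (f : EuclideanSpace ℝ (Fin d) → ℝ) :
    ∫ θ, f θ = ∫ y : Fin d → ℝ, f ((MeasurableEquiv.toLp 2 (Fin d → ℝ)) y) :=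
  ((MeasurePreserving.symm _
      (EuclideanSpace.volume_preserving_symm_measurableEquiv_toLp (Fin d))).integral_comp
    (MeasurableEquiv.measurableEmbedding _) f).symm

lemma euclid_symm_apply (y : Fin d → ℝ) (i : Fin d) :
    (MeasurableEquiv.toLp 2 (Fin d → ℝ)) y i = y i := by
  rfl

lemma euclid_integrable_iff (f : EuclideanSpace ℝ (Fin d) → ℝ) :
    Integrable f ↔
      Integrable (fun y : Fin d → ℝ => f ((MeasurableEquiv.toLp 2 (Fin d → ℝ)) y)) := by
  rw [← MeasurePreserving.integrable_comp_emb
    (MeasurePreserving.symm _ (EuclideanSpace.volume_preserving_symm_measurableEquiv_toLp (Fin d)))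
    (MeasurableEquiv.measurableEmbedding _)]
  rfl

lemma gp_integrable (hσ : 0 < σ) (c : EuclideanSpace ℝ (Fin d)) :
    Integrable (fun θ => gaussianProposal d σ θ c) := by
  rw [euclid_integrable_iff]
  have : Integrable (fun y : Fin d → ℝ => ∏ i, gauss1 σ (y i - c i)) :=
    Integrable.fintype_prod (f := fun i t => gauss1 σ (t - c i))
      (fun i => (gauss1_integrable hσ).comp_sub_right (c i))
  refine this.congr (Filter.Eventually.of_forall fun y => ?_)
  dsimp only
  rw [gp_prod hσ]
  simp [euclid_symm_apply]

lemma gp_integral (hσ : 0 < σ) (c : EuclideanSpace ℝ (Fin d)) :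
    ∫ θ, gaussianProposal d σ θ c = 1 := by
  rw [euclid_integral_eq]
  have : ∀ y : Fin d → ℝ,
      gaussianProposal d σ ((MeasurableEquiv.toLp 2 (Fin d → ℝ)) y) c
        = ∏ i, gauss1 σ (y i - c i) := by
    intro y; rw [gp_prod hσ]; simp [euclid_symm_apply]
  simp_rw [this]
  rw [volume_pi, integral_fintype_prod_eq_prod (f := fun i t => gauss1 σ (t - c i))]
  have : ∀ i : Fin d, ∫ t : ℝ, gauss1 σ (t - c i) = 1 := by
    intro i; rw [integral_sub_right_eq_self (gauss1 σ) (c i)]; exact gauss1_integral hσ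
  simp [this]

noncomputable def hij (σ : ℝ) (c : ℝ) (pick : Bool) (t : ℝ) : ℝ :=
  (if pick then (t - c) ^ 2 else 1) * gauss1 σ (t - c)

lemma hij_integrable (hσ : 0 < σ) (c : ℝ) (pick : Bool) : Integrable (hij σ c pick) := by
  cases pick with
  | false =>
      refine ((gauss1_integrable hσ).comp_sub_right c).congr
        (Filter.Eventually.of_forall fun t => ?_)
      simp [hij]
  | true =>
      refine ((gauss1_sq_integrable hσ).comp_sub_right c).congr
        (Filter.Eventually.of_forall fun t => ?_)
      simp [hij]

lemma hij_integral (hσ : 0 < σ) (c : ℝ) :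
    (∫ t, hij σ c true t = σ ^ 2) ∧ (∫ t, hij σ c false t = 1) := by
  constructor
  · have : ∀ t : ℝ, hij σ c true t = (fun s => s ^ 2 * gauss1 σ s) (t - c) := by
      intro t; simp [hij]
    simp_rw [this]
    rw [integral_sub_right_eq_self (fun s => s ^ 2 * gauss1 σ s) c]
    exact gauss1_sq_integral hσ
  · have : ∀ t : ℝ, hij σ c false t = (fun s => gauss1 σ s) (t - c) := by
      intro t; simp [hij]
    simp_rw [this]
    rw [integral_sub_right_eq_self (fun s => gauss1 σ s) c]
    exact gauss1_integral hσ

lemma pi_sum_prod_eq (c : EuclideanSpace ℝ (Fin d)) (y : Fin d → ℝ) :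
    (∑ i, (y i - c i) ^ 2) * ∏ j, gauss1 σ (y j - c j)
      = ∑ i, ∏ j, hij σ (c j) (j == i) (y j) := by
  rw [Finset.sum_mul]
  congr 1; ext i
  unfold hij
  rw [Finset.prod_mul_distrib]
  congr 1
  rw [Finset.prod_eq_single i (fun j _ hj => by simp [hj]) (by simp)]
  simp

lemma pi_sq_integrable (hσ : 0 < σ) (c : EuclideanSpace ℝ (Fin d)) :
    Integrable (fun y : Fin d → ℝ => (∑ i, (y i - c i) ^ 2) * ∏ j, gauss1 σ (y j - c j)) := by
  simp_rw [pi_sum_prod_eq c]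
  exact integrable_finset_sum _ (fun i _ =>
    Integrable.fintype_prod (f := fun j t => hij σ (c j) (j == i) t)
      (fun j => hij_integrable hσ (c j) (j == i)))

lemma pi_sq_integral (hσ : 0 < σ) (c : EuclideanSpace ℝ (Fin d)) :
    ∫ y : Fin d → ℝ, (∑ i, (y i - c i) ^ 2) * ∏ j, gauss1 σ (y j - c j) = d * σ ^ 2 := by
  simp_rw [pi_sum_prod_eq c]
  rw [integral_finset_sum (μ := volume) _ (fun i _ =>
    Integrable.fintype_prod (f := fun j t => hij σ (c j) (j == i) t)
      (fun j => hij_integrable hσ (c j) (j == i)))]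
  have : ∀ i : Fin d, ∫ y : Fin d → ℝ, ∏ j, hij σ (c j) (j == i) (y j) = σ ^ 2 := by
    intro i
    rw [volume_pi, integral_fintype_prod_eq_prod (f := fun j t => hij σ (c j) (j == i) t)]
    rw [Finset.prod_eq_single i (fun j _ hj => by
        rw [show (j == i) = false by simp [hj]]
        exact (hij_integral hσ (c j)).2) (by simp)]
    rw [show (i == i) = true by simp]
    exact (hij_integral hσ (c i)).1
  simp [this, Finset.card_univ]

lemma gp_sq_integrable (hσ : 0 < σ) (c : EuclideanSpace ℝ (Fin d)) :
    Integrable (fun θ => ‖θ - c‖ ^ 2 * gaussianProposal d σ θ c) := by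
  rw [euclid_integrable_iff]
  refine (pi_sq_integrable hσ c).congr (Filter.Eventually.of_forall fun y => ?_)
  dsimp only
  rw [gp_prod hσ, norm_sub_sq_eq_sum]
  simp [euclid_symm_apply]

lemma gp_sq_integral (hσ : 0 < σ) (c : EuclideanSpace ℝ (Fin d)) :
    ∫ θ, ‖θ - c‖ ^ 2 * gaussianProposal d σ θ c = d * σ ^ 2 := by
  rw [euclid_integral_eq]
  have : ∀ y : Fin d → ℝ,
      ‖(MeasurableEquiv.toLp 2 (Fin d → ℝ)) y - c‖ ^ 2
          * gaussianProposal d σ ((MeasurableEquiv.toLp 2 (Fin d → ℝ)) y) c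
        = (∑ i, (y i - c i) ^ 2) * ∏ j, gauss1 σ (y j - c j) := by
    intro y
    rw [gp_prod hσ, norm_sub_sq_eq_sum]
    simp [euclid_symm_apply]
  simp_rw [this]
  exact pi_sq_integral hσ c

lemma gp_nonneg (d : ℕ) (σ : ℝ) (θ c : EuclideanSpace ℝ (Fin d)) :
    0 ≤ gaussianProposal d σ θ c := by
  unfold gaussianProposal
  positivity

lemma gp_continuous (c : EuclideanSpace ℝ (Fin d)) :
    Continuous (fun θ => gaussianProposal d σ θ c) := by
  unfold gaussianProposal
  exact continuous_const.mul (Real.continuous_exp.comp (by fun_prop))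

lemma gp_abs_integrable (hσ : 0 < σ) (c : EuclideanSpace ℝ (Fin d)) :
    Integrable (fun θ => ‖θ - c‖ * gaussianProposal d σ θ c) := by
  refine Integrable.mono'
    (((gp_sq_integrable hσ c).add (gp_integrable hσ c)).div_const 2)
    (Continuous.aestronglyMeasurable (by
      exact (continuous_norm.comp (continuous_id.sub continuous_const)).mul
        (gp_continuous c))) ?_
  refine Filter.Eventually.of_forall fun θ => ?_
  have hq := gp_nonneg d σ θ c
  have h1 : 0 ≤ ‖θ - c‖ := norm_nonneg _
  rw [Real.norm_of_nonneg (by positivity)]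
  have h2 : 0 ≤ (‖θ - c‖ - 1) ^ 2 := sq_nonneg _
  simp only [Pi.add_apply]
  nlinarith [mul_nonneg (mul_nonneg h1 h1) hq]

lemma gp_abs_integral_le (hd : 0 < d) (hσ : 0 < σ) (c : EuclideanSpace ℝ (Fin d)) :
    ∫ θ, ‖θ - c‖ * gaussianProposal d σ θ c ≤ σ * Real.sqrt d := by
  set s := Real.sqrt d with hs
  have hs2 : s ^ 2 = d := Real.sq_sqrt (Nat.cast_nonneg d)
  have hspos : 0 < s := Real.sqrt_pos.mpr (by exact_mod_cast hd)
  set t := σ * s with ht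
  have htpos : 0 < t := by positivity
  have key : ∀ θ : EuclideanSpace ℝ (Fin d),
      ‖θ - c‖ * gaussianProposal d σ θ c
        ≤ (1/(2*t)) * (‖θ - c‖ ^ 2 * gaussianProposal d σ θ c)
          + (t/2) * gaussianProposal d σ θ c := by
    intro θ
    have hq := gp_nonneg d σ θ c
    have h1 : ‖θ - c‖ ≤ (1/(2*t)) * ‖θ - c‖ ^ 2 + t/2 := by
      have h2 : 0 ≤ (‖θ - c‖ - t) ^ 2 := sq_nonneg _
      have h3 : 0 < 2 * t := by linarith
      have e : (1/(2*t)) * ‖θ - c‖ ^ 2 + t/2 - ‖θ - c‖ = (‖θ - c‖ - t) ^ 2 / (2*t) := by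
        field_simp
        ring
      have hnn : 0 ≤ (‖θ - c‖ - t) ^ 2 / (2*t) := div_nonneg h2 h3.le
      linarith
    calc ‖θ - c‖ * gaussianProposal d σ θ c
        ≤ ((1/(2*t)) * ‖θ - c‖ ^ 2 + t/2) * gaussianProposal d σ θ c :=
          mul_le_mul_of_nonneg_right h1 hq
      _ = (1/(2*t)) * (‖θ - c‖ ^ 2 * gaussianProposal d σ θ c)
          + (t/2) * gaussianProposal d σ θ c := by ring
  have hint : Integrable (fun θ =>
      (1/(2*t)) * (‖θ - c‖ ^ 2 * gaussianProposal d σ θ c)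
        + (t/2) * gaussianProposal d σ θ c) :=
    ((gp_sq_integrable hσ c).const_mul _).add ((gp_integrable hσ c).const_mul _)
  calc ∫ θ, ‖θ - c‖ * gaussianProposal d σ θ c
      ≤ ∫ θ, ((1/(2*t)) * (‖θ - c‖ ^ 2 * gaussianProposal d σ θ c)
          + (t/2) * gaussianProposal d σ θ c) :=
        integral_mono (gp_abs_integrable hσ c) hint key
    _ = (1/(2*t)) * (d * σ ^ 2) + (t/2) * 1 := by
        rw [integral_add ((gp_sq_integrable hσ c).const_mul _)
          ((gp_integrable hσ c).const_mul _), integral_const_mul, integral_const_mul,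
          gp_sq_integral hσ c, gp_integral hσ c]
    _ = σ * s := by
        rw [ht]
        field_simp
        nlinarith [hs2, hspos, hσ]

local notation "⟪" x ", " y "⟫" => @inner ℝ _ _ x y

lemma grad_monotone {d : ℕ} (ℓ : EuclideanSpace ℝ (Fin d) → ℝ)
    (g : EuclideanSpace ℝ (Fin d) → EuclideanSpace ℝ (Fin d)) (μ : ℝ)
    (hg : ∀ θ, HasGradientAt ℓ (g θ) θ)
    (hconc : ConcaveOn ℝ Set.univ (fun θ => ℓ θ + (μ/2) * ‖θ‖ ^ 2))
    (a b : EuclideanSpace ℝ (Fin d)) :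
    ⟪g b, b - a⟫ + μ * ⟪b, b - a⟫ ≤ ⟪g a, b - a⟫ + μ * ⟪a, b - a⟫ := by
  set v := b - a with hv
  set γ : ℝ → EuclideanSpace ℝ (Fin d) := fun t => t • v + a with hγ
  have hγeq : ⇑(AffineMap.lineMap a b : ℝ →ᵃ[ℝ] _) = γ := by
    funext t; rw [AffineMap.lineMap_apply_module, hγ]; module
  have hconc2 : ConcaveOn ℝ Set.univ
      (fun t : ℝ => ℓ (γ t) + (μ/2) * ‖γ t‖ ^ 2) := by
    have := hconc.comp_affineMap (AffineMap.lineMap a b : ℝ →ᵃ[ℝ] _)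
    rw [Set.preimage_univ] at this
    simp only [hγeq] at this
    exact this
  set D : ℝ → ℝ := fun t => ⟪g (γ t), v⟫ + μ * ⟪γ t, v⟫ with hD
  have hφ : ∀ t : ℝ, HasDerivAt (fun t => ℓ (γ t) + (μ/2) * ‖γ t‖ ^ 2) (D t) t := by
    intro t
    have hγ' : HasDerivAt γ v t := by
      simpa [hγ] using ((hasDerivAt_id t).smul_const v).add_const a
    have h1 : HasDerivAt (fun t => ℓ (γ t)) ⟪g (γ t), v⟫ t := by
      have := ((hg (γ t)).hasFDerivAt).comp_hasDerivAt t hγ'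
      simp only [InnerProductSpace.toDual_apply_apply] at this
      exact this
    have h2 : HasDerivAt (fun t => (μ/2) * ‖γ t‖ ^ 2) (μ * ⟪γ t, v⟫) t := by
      have hin : HasDerivAt (fun t => ⟪γ t, γ t⟫) (⟪γ t, v⟫ + ⟪v, γ t⟫) t :=
        HasDerivAt.inner ℝ hγ' hγ'
      have := hin.const_mul (μ/2)
      have heq : (fun t => (μ/2) * ⟪γ t, γ t⟫) = fun t => (μ/2) * ‖γ t‖ ^ 2 := by
        funext s; rw [real_inner_self_eq_norm_sq]
      rw [heq] at this
      exact this.congr_deriv (by rw [real_inner_comm v (γ t)]; ring)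
    exact h1.add h2
  have key : D 1 ≤ D 0 := by
    have h1 : D 1 ≤ slope (fun t => ℓ (γ t) + (μ/2) * ‖γ t‖ ^ 2) 0 1 :=
      hconc2.le_slope_of_hasDerivAt (Set.mem_univ 0) (Set.mem_univ 1) one_pos (hφ 1)
    have h2 : slope (fun t => ℓ (γ t) + (μ/2) * ‖γ t‖ ^ 2) 0 1 ≤ D 0 :=
      hconc2.slope_le_of_hasDerivAt (Set.mem_univ 0) (Set.mem_univ 1) one_pos (hφ 0)
    exact h1.trans h2
  have hγ1 : γ 1 = b := by simp [hγ, hv]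
  have hγ0 : γ 0 = a := by simp [hγ]
  rw [hD] at key
  simp only [hγ1, hγ0] at key
  exact key

end SmoothedMLEAux

open SmoothedMLEAux in
/-- **The smoothed MLE is within `O(σ)` of the true MLE** (Appendix A.7.1 of the paper):
if the log-likelihood is `μ`-strongly concave with `L`-Lipschitz gradient `g`, `θ̂` is a
zero of `g` (the MLE) and `θ̂_σ` is a zero of the Bayes-optimal FSM score (the smoothed
MLE), then `‖θ̂_σ − θ̂‖ ≤ (L √d σ / μ) M` with `M = sup_θ p(x|θ)/Z_σ(θ̂_σ)`. -/
theorem smoothed_mle_close_to_mle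
    (d k : ℕ) (hd : 0 < d) (hk : 0 < k)
    (x : EuclideanSpace ℝ (Fin k))
    (σ L μ : ℝ) (hσ : 0 < σ) (hL : 0 ≤ L) (hμ : 0 < μ)
    -- `p θ x'` is the likelihood family `p(x'|θ)`
    (p : EuclideanSpace ℝ (Fin d) → EuclideanSpace ℝ (Fin k) → ℝ)
    (hp_meas : Measurable (Function.uncurry p))
    (hp_pos : ∀ θ x', 0 < p θ x')
    (hp_prob : ∀ θ, ∫ x', p θ x' = 1)
    -- `ℓ = log p(x|·)` is differentiable with gradient `g`, μ-strongly concave,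
    -- and `g` is `L`-Lipschitz
    (g : EuclideanSpace ℝ (Fin d) → EuclideanSpace ℝ (Fin d))
    (hg : ∀ θ, HasGradientAt (fun θ' => Real.log (p θ' x)) (g θ) θ)
    (hconc : ConcaveOn ℝ Set.univ
      (fun θ => Real.log (p θ x) + (μ / 2) * ‖θ‖ ^ 2))
    (hgLip : LipschitzWith (Real.toNNReal L) g)
    -- the smoothed normalizing constant `Z_σ(θt) ∈ (0, ∞)` for every `θt`
    (Z : EuclideanSpace ℝ (Fin d) → ℝ)
    (hZ : ∀ θt, Z θt = ∫ θ, p θ x * gaussianProposal d σ θ θt)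
    (hZ_int : ∀ θt, Integrable (fun θ => p θ x * gaussianProposal d σ θ θt))
    (hZ_pos : ∀ θt, 0 < Z θt)
    -- `θ̂` is the MLE : a zero of the score
    (θhat : EuclideanSpace ℝ (Fin d)) (hθhat : g θhat = 0)
    -- `θ̂_σ` is the smoothed MLE : a zero of the Bayes-optimal FSM score
    (θhatσ : EuclideanSpace ℝ (Fin d))
    (hθhatσ : (∫ θ, (p θ x * gaussianProposal d σ θ θhatσ / Z θhatσ) • g θ) = 0)
    (hg_int : Integrable
      (fun θ => (p θ x * gaussianProposal d σ θ θhatσ / Z θhatσ) • g θ))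
    -- `M = sup_θ p(x|θ)/Z_σ(θ̂_σ) < ∞`
    (M : ℝ) (hM : M = ⨆ θ : EuclideanSpace ℝ (Fin d), p θ x / Z θhatσ)
    (hMbdd : BddAbove (Set.range fun θ : EuclideanSpace ℝ (Fin d) => p θ x / Z θhatσ)) :
    ‖θhatσ - θhat‖ ≤ (L * Real.sqrt d * σ / μ) * M := by
  classical
  set c := θhatσ with hc
  set q : EuclideanSpace ℝ (Fin d) → ℝ := fun θ => gaussianProposal d σ θ c with hq
  set piD : EuclideanSpace ℝ (Fin d) → ℝ := fun θ => p θ x * q θ / Z c with hpiD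
  -- basic facts about the posterior density
  have hπ_int : Integrable piD := (hZ_int c).div_const (Z c)
  have hπ_one : ∫ θ, piD θ = 1 := by
    rw [hpiD]
    rw [integral_div, ← hZ c, div_self (hZ_pos c).ne']
  have hπ_nonneg : ∀ θ, 0 ≤ piD θ := fun θ =>
    div_nonneg (mul_nonneg (hp_pos θ x).le (gp_nonneg d σ θ c)) (hZ_pos c).le
  have hM_ub : ∀ θ, p θ x / Z c ≤ M := by
    intro θ
    rw [hM]
    exact le_ciSup hMbdd θ
  have hM_pos : 0 < M := lt_of_lt_of_le (div_pos (hp_pos θhat x) (hZ_pos c)) (hM_ub θhat)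
  have hπ_le : ∀ θ, piD θ ≤ M * q θ := by
    intro θ
    have : piD θ = (p θ x / Z c) * q θ := by rw [hpiD]; ring
    rw [this]
    exact mul_le_mul_of_nonneg_right (hM_ub θ) (gp_nonneg d σ θ c)
  -- the key representation of g θhatσ
  have hrepr : g c = ∫ θ, piD θ • (g c - g θ) := by
    have e1 : (fun θ => piD θ • (g c - g θ))
        = fun θ => piD θ • g c - piD θ • g θ := by
      funext θ; rw [smul_sub]
    rw [e1, integral_sub (hπ_int.smul_const (g c)) hg_int, integral_smul_const,
      hπ_one, hθhatσ, one_smul, sub_zero]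
  -- bound its norm
  have hLip : ∀ θ, ‖g c - g θ‖ ≤ L * ‖θ - c‖ := by
    intro θ
    have h := hgLip.dist_le_mul c θ
    rw [Real.coe_toNNReal L hL] at h
    calc ‖g c - g θ‖ = dist (g c) (g θ) := (dist_eq_norm _ _).symm
      _ ≤ L * dist c θ := h
      _ = L * ‖θ - c‖ := by rw [dist_eq_norm, norm_sub_rev]
  have hgnorm : ‖g c‖ ≤ L * M * (σ * Real.sqrt d) := by
    rw [hrepr]
    calc ‖∫ θ, piD θ • (g c - g θ)‖
        ≤ ∫ θ, ‖piD θ • (g c - g θ)‖ := norm_integral_le_integral_norm _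
      _ ≤ ∫ θ, (L * M) * (‖θ - c‖ * q θ) := by
          refine integral_mono_of_nonneg
            (Filter.Eventually.of_forall fun θ => norm_nonneg _)
            (((gp_abs_integrable hσ c).const_mul (L * M))) ?_
          refine Filter.Eventually.of_forall fun θ => ?_
          dsimp only
          rw [norm_smul, Real.norm_of_nonneg (hπ_nonneg θ)]
          calc piD θ * ‖g c - g θ‖
              ≤ (M * q θ) * (L * ‖θ - c‖) :=
                mul_le_mul (hπ_le θ) (hLip θ) (norm_nonneg _)
                  (mul_nonneg hM_pos.le (gp_nonneg d σ θ c))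
            _ = (L * M) * (‖θ - c‖ * q θ) := by ring
      _ = (L * M) * ∫ θ, ‖θ - c‖ * q θ := integral_const_mul _ _
      _ ≤ (L * M) * (σ * Real.sqrt d) :=
          mul_le_mul_of_nonneg_left (gp_abs_integral_le hd hσ c)
            (mul_nonneg hL hM_pos.le)
  -- strong concavity gives μ‖v‖² ≤ ‖g c‖ ‖v‖
  set v := θhatσ - θhat with hv
  have hmono := grad_monotone (fun θ' => Real.log (p θ' x)) g μ hg hconc θhat θhatσ
  have hga : g θhat = 0 := hθhat
  rw [hga, inner_zero_left] at hmono
  have hinner : (inner ℝ (θhatσ : EuclideanSpace ℝ (Fin d)) v : ℝ) - inner ℝ θhat v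
      = ‖v‖ ^ 2 := by
    rw [← inner_sub_left, ← hv, real_inner_self_eq_norm_sq]
  have hkey : μ * ‖v‖ ^ 2 ≤ ‖g c‖ * ‖v‖ := by
    have h1 : (inner ℝ (g θhatσ) v : ℝ) + μ * ‖v‖ ^ 2 ≤ 0 := by nlinarith [hmono, hinner]
    have h2 : -(inner ℝ (g θhatσ) v : ℝ) ≤ ‖g θhatσ‖ * ‖v‖ := by
      have := abs_real_inner_le_norm (g θhatσ) v
      have h3 := neg_abs_le (inner ℝ (g θhatσ) v : ℝ)
      linarith
    rw [hc]
    linarith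
  -- conclude
  have hRHS : (L * Real.sqrt d * σ / μ) * M = L * M * (σ * Real.sqrt d) / μ := by ring
  rw [hRHS]
  have hRHS_nonneg : 0 ≤ L * M * (σ * Real.sqrt d) / μ :=
    div_nonneg (mul_nonneg (mul_nonneg hL hM_pos.le) (by positivity)) hμ.le
  rcases eq_or_lt_of_le (norm_nonneg v) with hv0 | hv0
  · have hz : ‖θhatσ - θhat‖ = 0 := hv0.symm
    rw [hz]
    exact hRHS_nonneg
  · have h4 : μ * ‖v‖ ≤ L * M * (σ * Real.sqrt d) := by
      have := mul_le_mul_of_nonneg_right hgnorm (norm_nonneg v)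
      nlinarith [hkey, hv0]
    have : ‖θhatσ - θhat‖ = ‖v‖ := rfl
    rw [this, le_div_iff₀ hμ]
    linarith
end
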